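/- arXiv:1511.08163 — 6 statements merged into one kernel-verified Lean document; each statement's English description precedes it below -/
import Mathlib

section
/- Let n ≥ 4 be an integer. Consider the red/blue edge-coloring of K_{6n} ⊔ S_{4n+1} defined as follows: partition the vertex set of K_{6n} into three sets A_1, A_2, A_3 each of size 2n; color all edges inside each A_i red and all edges between different A_i's blue; join the additional vertex w to all 4n vertices of A_1 ∪ A_2 by blue edges and to exactly one vertex of A_3 by a red edge. Then this coloring contains no red subgraph isomorphic to F_n and no blue subgraph isomorphic to K_4. Consequently r_*(F_n, K_4) ≥ 4n + 2. -/
open SimpleGraph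

/-- The fan graph `Fₙ`: the join of a single vertex (the center, `none`) with `n`
pairwise disjoint edges (`some (i, a)` is matched with `some (i, !a)`). -/
def Fan (n : ℕ) : SimpleGraph (Option (Fin n × Bool)) where
  Adj u v := u ≠ v ∧ (u = none ∨ v = none ∨ ∃ i a b, u = some (i, a) ∧ v = some (i, b))
  symm := by
    constructor
    rintro u v ⟨h1, h2⟩
    exact ⟨h1.symm, by tauto⟩
  loopless := by constructor; rintro u ⟨h1, -⟩; exact h1 rfl

/-- `G` contains a subgraph isomorphic to the fan graph `Fₙ`. -/
def ContainsFan {V : Type*} (G : SimpleGraph V) (n : ℕ) : Prop :=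
  ∃ f : Option (Fin n × Bool) ↪ V, ∀ u v, (Fan n).Adj u v → G.Adj (f u) (f v)

/-- `G` contains a subgraph isomorphic to `K₄`. -/
def ContainsK4 {V : Type*} (G : SimpleGraph V) : Prop :=
  ∃ a b c d : V, G.Adj a b ∧ G.Adj a c ∧ G.Adj a d ∧ G.Adj b c ∧ G.Adj b d ∧ G.Adj c d

/-- The graph `K_m ⊔ S_k`: the complete graph on `m` vertices together with one extra
vertex (`none`) joined to `k` of the vertices of the complete graph.
A red/blue edge-coloring of this graph is given by its red subgraph `R ≤ KSk m k`;
the blue subgraph is then `KSk m k \ R`. -/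
def KSk (m k : ℕ) : SimpleGraph (Option (Fin m)) where
  Adj u v :=
    match u, v with
    | some a, some b => a ≠ b
    | none, some a => a.val < k
    | some a, none => a.val < k
    | none, none => False
  symm := by constructor; rintro (_ | a) (_ | b) h <;> first | exact h | exact h.symm
  loopless := by constructor; rintro (_ | a) h; exacts [h, h rfl]

lemma noFan {m n : ℕ} (hn : 1 ≤ n) (R : SimpleGraph (Option (Fin m)))
    (A : Fin 3 → Finset (Fin m))
    (hcard : ∀ i, (A i).card = 2 * n)
    (hdisj : ∀ i j : Fin 3, i ≠ j → Disjoint (A i) (A j))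
    (hadj : ∀ u v, R.Adj (some u) (some v) → ∃ i, u ∈ A i ∧ v ∈ A i)
    (a₀ : Fin m) (hw : ∀ u, R.Adj none (some u) → u = a₀) :
    ¬ ContainsFan R n := by
  rintro ⟨f, hf⟩
  have hcl : ∀ x : Fin n × Bool, (Fan n).Adj none (some x) :=
    fun x => ⟨by simp, Or.inl rfl⟩
  have hpair : ∀ (i : Fin n) (a : Bool), (Fan n).Adj (some (i, a)) (some (i, !a)) :=
    fun i a => ⟨by cases a <;> simp, Or.inr (Or.inr ⟨i, a, !a, rfl, rfl⟩)⟩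
  set i₁ : Fin n := ⟨0, hn⟩ with hi₁
  obtain ⟨u, hu⟩ : ∃ u, f none = some u := by
    cases hcn : f none with
    | some u => exact ⟨u, rfl⟩
    | none =>
      exfalso
      have h1 := hf _ _ (hcl (i₁, true))
      have h2 := hf _ _ (hcl (i₁, false))
      rw [hcn] at h1 h2
      obtain ⟨v1, hv1⟩ : ∃ v, f (some (i₁, true)) = some v := by
        cases h : f (some (i₁, true)) with
        | some v => exact ⟨v, rfl⟩
        | none => exact absurd (f.injective (h.trans hcn.symm)) (by simp)
      obtain ⟨v2, hv2⟩ : ∃ v, f (some (i₁, false)) = some v := by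
        cases h : f (some (i₁, false)) with
        | some v => exact ⟨v, rfl⟩
        | none => exact absurd (f.injective (h.trans hcn.symm)) (by simp)
      rw [hv1] at h1
      rw [hv2] at h2
      have hv12 : v1 = v2 := (hw _ h1).trans (hw _ h2).symm
      have : f (some (i₁, true)) = f (some (i₁, false)) := by rw [hv1, hv2, hv12]
      have := f.injective this
      simp at this
  have hsome : ∀ x : Fin n × Bool, ∃ v, f (some x) = some v := by
    rintro ⟨i, a⟩
    cases h : f (some (i, a)) with
    | some v => exact ⟨v, rfl⟩
    | none =>
      exfalso
      have h1 := hf _ _ ((hcl (i, a)).symm)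
      rw [h, hu] at h1
      have hu0 : u = a₀ := hw _ h1
      obtain ⟨w', hw'⟩ : ∃ w', f (some (i, !a)) = some w' := by
        cases h2 : f (some (i, !a)) with
        | some w' => exact ⟨w', rfl⟩
        | none =>
          have := f.injective (h2.trans h.symm)
          cases a <;> simp_all
      have h3 := hf _ _ ((hpair i a).symm)
      rw [h, hw'] at h3
      have hwa : w' = a₀ := hw _ h3.symm
      have : f (some (i, !a)) = f none := by rw [hw', hu, hwa, hu0]
      have := f.injective this
      simp at this
  have hall : ∀ y : Option (Fin n × Bool), ∃ v, f y = some v := by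
    intro y
    cases y with
    | none => exact ⟨u, hu⟩
    | some x => exact hsome x
  choose g hg using hall
  have hadj' : ∀ x : Fin n × Bool, R.Adj (some (g none)) (some (g (some x))) := by
    intro x
    have := hf _ _ (hcl x)
    rwa [hg, hg] at this
  obtain ⟨i₀, hui₀, -⟩ := hadj _ _ (hadj' (i₁, true))
  have hmem : ∀ y, g y ∈ A i₀ := by
    intro y
    cases y with
    | none => exact hui₀
    | some x =>
      obtain ⟨i, h2, h3⟩ := hadj _ _ (hadj' x)
      rcases eq_or_ne i i₀ with rfl | hne
      · exact h3
      · exact absurd hui₀ (Finset.disjoint_left.mp (hdisj i i₀ hne) h2)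
  have hginj : Function.Injective g := fun y z h => f.injective (by rw [hg, hg, h])
  have hcard2 := Finset.card_le_card_of_injOn (s := Finset.univ) (t := A i₀) g (fun y _ => hmem y) hginj.injOn
  simp [Finset.card_univ, hcard] at hcard2
  omega

lemma noK4 {m : ℕ} (B : SimpleGraph (Option (Fin m))) (A : Fin 3 → Finset (Fin m))
    (hcover : ∀ u, ∃ i, u ∈ A i)
    (hadj : ∀ u v, B.Adj (some u) (some v) → ∀ i, ¬(u ∈ A i ∧ v ∈ A i))
    (hw : ∀ u, B.Adj none (some u) → ∃ i : Fin 3, i.val < 2 ∧ u ∈ A i) :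
    ¬ ContainsK4 B := by
  rintro ⟨a, b, c, d, hab, hac, had, hbc, hbd, hcd⟩
  have key : ∀ x y : Fin m, B.Adj (some x) (some y) →
      ∀ i j : Fin 3, x ∈ A i → y ∈ A j → (i : ℕ) ≠ (j : ℕ) := by
    intro x y h i j hx hy hij
    exact hadj x y h i ⟨hx, (Fin.ext hij : i = j) ▸ hy⟩
  have h3 : ∀ x y z : Fin m, B.Adj none (some x) → B.Adj none (some y) →
      B.Adj none (some z) → B.Adj (some x) (some y) → B.Adj (some x) (some z) →
      B.Adj (some y) (some z) → False := by
    intro x y z hx hy hz hxy hxz hyz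
    obtain ⟨i, hi, hxi⟩ := hw x hx
    obtain ⟨j, hj, hyj⟩ := hw y hy
    obtain ⟨l, hl, hzl⟩ := hw z hz
    have h1 := key x y hxy i j hxi hyj
    have h2 := key x z hxz i l hxi hzl
    have h4 := key y z hyz j l hyj hzl
    omega
  have h4' : ∀ x y z w : Fin m, B.Adj (some x) (some y) → B.Adj (some x) (some z) →
      B.Adj (some x) (some w) → B.Adj (some y) (some z) → B.Adj (some y) (some w) →
      B.Adj (some z) (some w) → False := by
    intro x y z w hxy hxz hxw hyz hyw hzw
    obtain ⟨i, hxi⟩ := hcover x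
    obtain ⟨j, hyj⟩ := hcover y
    obtain ⟨l, hzl⟩ := hcover z
    obtain ⟨p, hwp⟩ := hcover w
    have e1 := key x y hxy i j hxi hyj
    have e2 := key x z hxz i l hxi hzl
    have e3 := key x w hxw i p hxi hwp
    have e4 := key y z hyz j l hyj hzl
    have e5 := key y w hyw j p hyj hwp
    have e6 := key z w hzw l p hzl hwp
    have := i.isLt
    have := j.isLt
    have := l.isLt
    have := p.isLt
    omega
  rcases a with _ | a <;> rcases b with _ | b <;> rcases c with _ | c <;> rcases d with _ | d <;>
    first
      | exact B.irrefl hab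
      | exact B.irrefl hac
      | exact B.irrefl had
      | exact B.irrefl hbc
      | exact B.irrefl hbd
      | exact B.irrefl hcd
      | exact h3 _ _ _ hab hac had hbc hbd hcd
      | exact h3 _ _ _ hab.symm hbc hbd hac had hcd
      | exact h3 _ _ _ hac.symm hbc.symm hcd hab had hbd
      | exact h3 _ _ _ had.symm hbd.symm hcd.symm hab hac hbc
      | exact h4' _ _ _ _ hab hac had hbc hbd hcd

/-- The red graph used for the lower-bound construction: three red cliques of size `2n`
(consecutive blocks of `Fin (6n)`), plus a red pendant edge from `none` to the vertex
`4n` if that edge is present in the host `K_{6n} ⊔ S_k`. -/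
def Rlow (n k : ℕ) : SimpleGraph (Option (Fin (6 * n))) where
  Adj u v :=
    match u, v with
    | some a, some b => a ≠ b ∧ ∃ i : ℕ, i < 3 ∧
        (2 * n * i ≤ a.val ∧ a.val < 2 * n * (i + 1)) ∧
        (2 * n * i ≤ b.val ∧ b.val < 2 * n * (i + 1))
    | none, some a => a.val = 4 * n ∧ a.val < k
    | some a, none => a.val = 4 * n ∧ a.val < k
    | none, none => False
  symm := by
    constructor
    rintro (_ | a) (_ | b) h
    · exact h
    · exact h
    · exact h
    · obtain ⟨hne, i, hi, h1, h2⟩ := h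
      exact ⟨hne.symm, i, hi, h2, h1⟩
  loopless := by
    constructor
    rintro (_ | a) h
    · exact h
    · exact h.1 rfl

/-- The explicit critical coloring of `K_{6n} ⊔ S_{4n+1}`: three red cliques
`A₁, A₂, A₃` of size `2n`, all cross edges blue, the extra vertex `w` (here `none`)
joined by blue edges to all of `A₁ ∪ A₂` and by one red edge to a vertex `a₀ ∈ A₃`.
It contains no red `Fₙ` and no blue `K₄`; consequently `r_*(Fₙ, K₄) ≥ 4n + 2`
(the star-critical host being `K_{6n} ⊔ S_k` since `r(Fₙ, K₄) = 6n + 1`). -/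
theorem star_critical_lower_bound (n : ℕ) (hn : 4 ≤ n)
    (A1 A2 A3 : Finset (Fin (6 * n)))
    (hc1 : A1.card = 2 * n) (hc2 : A2.card = 2 * n) (hc3 : A3.card = 2 * n)
    (hd12 : Disjoint A1 A2) (hd13 : Disjoint A1 A3) (hd23 : Disjoint A2 A3)
    (hcover : A1 ∪ A2 ∪ A3 = Finset.univ)
    (a₀ : Fin (6 * n)) (ha₀ : a₀ ∈ A3)
    (R B : SimpleGraph (Option (Fin (6 * n))))
    (hR : ∀ u v : Fin (6 * n), R.Adj (some u) (some v) ↔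
      u ≠ v ∧ ((u ∈ A1 ∧ v ∈ A1) ∨ (u ∈ A2 ∧ v ∈ A2) ∨ (u ∈ A3 ∧ v ∈ A3)))
    (hRw : ∀ u : Fin (6 * n), R.Adj none (some u) ↔ u = a₀)
    (hB : ∀ u v : Fin (6 * n), B.Adj (some u) (some v) ↔
      u ≠ v ∧ ¬((u ∈ A1 ∧ v ∈ A1) ∨ (u ∈ A2 ∧ v ∈ A2) ∨ (u ∈ A3 ∧ v ∈ A3)))
    (hBw : ∀ u : Fin (6 * n), B.Adj none (some u) ↔ u ∈ A1 ∪ A2) :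
    (¬ ContainsFan R n ∧ ¬ ContainsK4 B) ∧
    ∀ k : ℕ, 0 < k →
      (∀ R' : SimpleGraph (Option (Fin (6 * n))), R' ≤ KSk (6 * n) k →
        ContainsFan R' n ∨ ContainsK4 (KSk (6 * n) k \ R')) →
      4 * n + 2 ≤ k := by
  have hn1 : 1 ≤ n := by omega
  constructor
  · constructor
    · -- no red fan
      refine noFan hn1 R ![A1, A2, A3] ?_ ?_ ?_ a₀ ?_
      · intro i; fin_cases i <;> simpa
      · intro i j hne
        fin_cases i <;> fin_cases j <;>
          first
            | exact absurd rfl hne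
            | simpa using hd12
            | simpa using hd12.symm
            | simpa using hd13
            | simpa using hd13.symm
            | simpa using hd23
            | simpa using hd23.symm
      · intro u v h
        rw [hR] at h
        rcases h.2 with ⟨h1, h2⟩ | ⟨h1, h2⟩ | ⟨h1, h2⟩
        · exact ⟨0, h1, h2⟩
        · exact ⟨1, h1, h2⟩
        · exact ⟨2, h1, h2⟩
      · intro u h; exact (hRw u).mp h
    · -- no blue K4
      refine noK4 B ![A1, A2, A3] ?_ ?_ ?_
      · intro u
        have hu : u ∈ A1 ∪ A2 ∪ A3 := by rw [hcover]; exact Finset.mem_univ u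
        rcases Finset.mem_union.mp hu with hu' | hu'
        · rcases Finset.mem_union.mp hu' with hu'' | hu''
          · exact ⟨0, hu''⟩
          · exact ⟨1, hu''⟩
        · exact ⟨2, hu'⟩
      · intro u v h i hi
        rw [hB] at h
        apply h.2
        fin_cases i
        · exact Or.inl hi
        · exact Or.inr (Or.inl hi)
        · exact Or.inr (Or.inr hi)
      · intro u h
        rw [hBw] at h
        rcases Finset.mem_union.mp h with h' | h'
        · exact ⟨0, by norm_num, h'⟩
        · exact ⟨1, by norm_num, h'⟩
  · -- lower bound
    intro k hk hforall
    by_contra hlt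
    push_neg at hlt
    have hk' : k ≤ 4 * n + 1 := by omega
    -- the three blocks
    set A' : Fin 3 → Finset (Fin (6 * n)) := fun i =>
      Finset.image (fun j : Fin (2 * n) =>
        (⟨2 * n * i.val + j.val, by
          have h1 : i.val ≤ 2 := by omega
          have h2 := Nat.mul_le_mul_left (2 * n) h1
          have := j.isLt
          omega⟩ : Fin (6 * n))) Finset.univ with hA'
    have hmemA : ∀ (i : Fin 3) (u : Fin (6 * n)),
        u ∈ A' i ↔ 2 * n * i.val ≤ u.val ∧ u.val < 2 * n * i.val + 2 * n := by
      intro i u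
      simp only [hA', Finset.mem_image, Finset.mem_univ, true_and]
      constructor
      · rintro ⟨j, rfl⟩
        have := j.isLt
        simp only []
        omega
      · rintro ⟨h1, h2⟩
        exact ⟨⟨u.val - 2 * n * i.val, by omega⟩, Fin.ext (by simp; omega)⟩
    have hcardA : ∀ i, (A' i).card = 2 * n := by
      intro i
      rw [hA']
      rw [Finset.card_image_of_injective _ ?_, Finset.card_univ, Fintype.card_fin]
      intro j1 j2 h
      have := congrArg Fin.val h
      simp at this
      exact Fin.ext this
    have hdisjA : ∀ i j : Fin 3, i ≠ j → Disjoint (A' i) (A' j) := by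
      intro i j hne
      rw [Finset.disjoint_left]
      intro u hu1 hu2
      rw [hmemA] at hu1 hu2
      have hvne : i.val ≠ j.val := fun h => hne (Fin.ext h)
      fin_cases i <;> fin_cases j <;> simp_all <;> omega
    have hle : Rlow n k ≤ KSk (6 * n) k := by
      rintro (_ | a) (_ | b) h
      · exact h
      · exact h.2
      · exact h.2
      · exact h.1
    rcases hforall (Rlow n k) hle with hfan | hK4
    · refine noFan hn1 (Rlow n k) A' hcardA hdisjA ?_ ⟨4 * n, by omega⟩ ?_ hfan
      · intro u v h
        obtain ⟨hne, i, hi3, h1, h2⟩ := h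
        refine ⟨⟨i, hi3⟩, (hmemA _ u).mpr ?_, (hmemA _ v).mpr ?_⟩
        · have he : 2 * n * (i + 1) = 2 * n * i + 2 * n := by ring
          simp only []
          omega
        · have he : 2 * n * (i + 1) = 2 * n * i + 2 * n := by ring
          simp only []
          omega
      · intro u h
        exact Fin.ext h.1
    · refine noK4 (KSk (6 * n) k \ Rlow n k) A' ?_ ?_ ?_ hK4
      · intro u
        have hu6 := u.isLt
        by_cases h0 : u.val < 2 * n
        · exact ⟨0, (hmemA 0 u).mpr (by simp; omega)⟩
        · by_cases h1 : u.val < 4 * n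
          · exact ⟨1, (hmemA 1 u).mpr (by simp; omega)⟩
          · exact ⟨2, (hmemA 2 u).mpr (by simp; omega)⟩
      · intro u v h i hi
        rw [SimpleGraph.sdiff_adj] at h
        obtain ⟨h1, h2⟩ := h
        have hne : u ≠ v := h1
        apply h2
        refine ⟨hne, i.val, i.isLt, ?_, ?_⟩
        · have := (hmemA i u).mp hi.1
          have he : 2 * n * (i.val + 1) = 2 * n * i.val + 2 * n := by ring
          omega
        · have := (hmemA i v).mp hi.2
          have he : 2 * n * (i.val + 1) = 2 * n * i.val + 2 * n := by ring
          omega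
      · intro u h
        rw [SimpleGraph.sdiff_adj] at h
        obtain ⟨h1, h2⟩ := h
        have hk1 : u.val < k := h1
        have hne4 : u.val ≠ 4 * n := fun he => h2 ⟨he, hk1⟩
        have hu4 : u.val < 4 * n := by omega
        by_cases h0 : u.val < 2 * n
        · exact ⟨0, by norm_num, (hmemA 0 u).mpr (by simp; omega)⟩
        · exact ⟨1, by norm_num, (hmemA 1 u).mpr (by simp; omega)⟩
end

section
/- Let n ≥ 2 be an integer and let K_{6n} be given a red/blue edge-coloring that is (F_n, K_4)-free. Then every vertex v satisfies 2n − 1 ≤ d^R(v) ≤ 2n + 1, where d^R(v) denotes the number of red edges incident to v. Consequently, the number d^B(v) of blue edges incident to v satisfies 4n − 2 ≤ d^B(v) ≤ 4n. -/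
open SimpleGraph

/-- A matching of `k` disjoint edges of `G` inside the finset `S`. -/
def MatchOn {V : Type*} (G : SimpleGraph V) (S : Finset V) (k : ℕ) : Prop :=
  ∃ m : Fin k × Bool → V, Function.Injective m ∧ (∀ p, m p ∈ S) ∧
    ∀ i, G.Adj (m (i, false)) (m (i, true))

lemma matchOn_zero {V : Type*} (G : SimpleGraph V) (S : Finset V) : MatchOn G S 0 :=
  ⟨fun p => Fin.elim0 p.1, fun p => Fin.elim0 p.1, fun p => Fin.elim0 p.1,
    fun i => Fin.elim0 i⟩

lemma matchOn_mono {V : Type*} {G : SimpleGraph V} {S T : Finset V} {k : ℕ}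
    (h : MatchOn G S k) (hsub : S ⊆ T) : MatchOn G T k := by
  obtain ⟨m, h1, h2, h3⟩ := h
  exact ⟨m, h1, fun p => hsub (h2 p), h3⟩

lemma matchOn_extend {V : Type*} [DecidableEq V] {G : SimpleGraph V} {S : Finset V} {k : ℕ}
    {x y : V} (h : MatchOn G S k) (hadj : G.Adj x y) (hx : x ∉ S) (hy : y ∉ S) :
    MatchOn G (insert x (insert y S)) (k + 1) := by
  obtain ⟨m, hinj, hmem, hadjm⟩ := h
  refine ⟨fun p => if h : (p.1 : ℕ) < k then m (⟨p.1, h⟩, p.2) else bif p.2 then y else x,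
    ?_, ?_, ?_⟩
  · rintro ⟨i, b⟩ ⟨j, c⟩ h
    by_cases hi : (i : ℕ) < k <;> by_cases hj : (j : ℕ) < k <;> simp only [hi, hj,
      dif_pos, dif_neg, not_false_iff] at h
    · have := hinj h
      simp only [Prod.mk.injEq, Fin.mk.injEq] at this
      simp only [Prod.mk.injEq]
      exact ⟨Fin.val_injective this.1, this.2⟩
    · exfalso; have hm := hmem (⟨i, hi⟩, b); rw [h] at hm
      cases c
      · exact hx hm
      · exact hy hm
    · exfalso; have hm := hmem (⟨j, hj⟩, c); rw [← h] at hm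
      cases b
      · exact hx hm
      · exact hy hm
    · have hb : b = c := by
        cases b <;> cases c
        · rfl
        · exact absurd h hadj.ne
        · exact absurd h.symm hadj.ne
        · rfl
      simp only [Prod.mk.injEq]
      exact ⟨Fin.val_injective (by omega), hb⟩
  · rintro ⟨i, b⟩
    by_cases hi : (i : ℕ) < k
    · simp only [hi, dif_pos]
      exact Finset.mem_insert_of_mem (Finset.mem_insert_of_mem (hmem _))
    · simp only [hi, dif_neg, not_false_iff]
      cases b
      · exact Finset.mem_insert_self _ _
      · exact Finset.mem_insert_of_mem (Finset.mem_insert_self _ _)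
  · intro i
    by_cases hi : (i : ℕ) < k <;> simp only [hi, dif_pos, dif_neg, not_false_iff]
    · exact hadjm _
    · exact hadj

lemma matchOn_or_indep {V : Type*} [DecidableEq V] (G : SimpleGraph V) (S : Finset V) (k : ℕ) :
    MatchOn G S (k + 1) ∨ ∃ U ⊆ S, S.card ≤ U.card + 2 * k ∧
      ∀ x ∈ U, ∀ y ∈ U, ¬ G.Adj x y := by
  induction k with
  | zero =>
    by_cases h : ∃ x ∈ S, ∃ y ∈ S, G.Adj x y
    · obtain ⟨x, hx, y, hy, hadj⟩ := h
      refine Or.inl (matchOn_mono (matchOn_extend (matchOn_zero G ∅) hadj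
        (Finset.notMem_empty _) (Finset.notMem_empty _)) ?_)
      intro z hz
      simp only [Finset.mem_insert, Finset.notMem_empty, or_false] at hz
      rcases hz with rfl | rfl
      · exact hx
      · exact hy
    · push_neg at h
      exact Or.inr ⟨S, Finset.Subset.refl S, by omega, h⟩
  | succ k ih =>
    rcases ih with hm | ⟨U, hUS, hcard, hind⟩
    · obtain ⟨m, hinj, hmem, hadjm⟩ := hm
      by_cases h : ∃ x ∈ S \ Finset.image m Finset.univ, ∃ y ∈ S \ Finset.image m Finset.univ,
          G.Adj x y
      · obtain ⟨x, hx, y, hy, hadj⟩ := h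
        rw [Finset.mem_sdiff] at hx hy
        have hmI : MatchOn G (Finset.image m Finset.univ) (k + 1) :=
          ⟨m, hinj, fun p => Finset.mem_image_of_mem m (Finset.mem_univ p), hadjm⟩
        refine Or.inl (matchOn_mono (matchOn_extend hmI hadj ?_ ?_) ?_)
        · exact fun hc => hx.2 hc
        · exact fun hc => hy.2 hc
        · intro z hz
          simp only [Finset.mem_insert] at hz
          rcases hz with rfl | rfl | hz
          · exact hx.1
          · exact hy.1
          · obtain ⟨p, _, rfl⟩ := Finset.mem_image.mp hz
            exact hmem p
      · push_neg at h
        refine Or.inr ⟨S \ Finset.image m Finset.univ, Finset.sdiff_subset, ?_, h⟩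
        have h1 : S ⊆ (S \ Finset.image m Finset.univ) ∪ Finset.image m Finset.univ := by
          intro z hz
          rw [Finset.mem_union, Finset.mem_sdiff]
          by_cases hzI : z ∈ Finset.image m Finset.univ
          · exact Or.inr hzI
          · exact Or.inl ⟨hz, hzI⟩
        have h2 : (Finset.image m Finset.univ).card ≤ 2 * (k + 1) := by
          calc (Finset.image m Finset.univ).card ≤ (Finset.univ : Finset (Fin (k+1) × Bool)).card :=
            Finset.card_image_le
          _ = 2 * (k + 1) := by simp [Fintype.card_prod]; ring
        have := Finset.card_union_le (S \ Finset.image m Finset.univ) (Finset.image m Finset.univ)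
        have := Finset.card_le_card h1
        omega
    · exact Or.inr ⟨U, hUS, by omega, hind⟩
/-- A clique of even size `2k` contains a matching of size `k`. -/
lemma matchOn_of_clique {V : Type*} [LinearOrder V] (G : SimpleGraph V) (S : Finset V) (k : ℕ)
    (hcard : S.card = 2 * k) (hclique : ∀ x ∈ S, ∀ y ∈ S, x ≠ y → G.Adj x y) :
    MatchOn G S k := by
  set e := S.orderIsoOfFin hcard with he
  have hidx : ∀ p : Fin k × Bool, 2 * (p.1 : ℕ) + (cond p.2 1 0) < 2 * k := by
    rintro ⟨i, b⟩
    have := i.2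
    cases b <;> simp <;> omega
  refine ⟨fun p => (e ⟨2 * (p.1 : ℕ) + (cond p.2 1 0), hidx p⟩ : V), ?_, ?_, ?_⟩
  · rintro ⟨i, b⟩ ⟨j, c⟩ h
    have h2 := e.injective (Subtype.ext h)
    rw [Fin.mk.injEq] at h2
    cases b <;> cases c <;>
      dsimp only at h2 <;>
      simp only [Bool.cond_false, Bool.cond_true] at h2
    · have hij : i = j := Fin.ext (by omega); subst hij; rfl
    · exact absurd h2 (by omega)
    · exact absurd h2 (by omega)
    · have hij : i = j := Fin.ext (by omega); subst hij; rfl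
  · intro p
    exact (e _).2
  · intro i
    refine hclique _ (e _).2 _ (e _).2 ?_
    intro hEq
    have h2 := e.injective (Subtype.ext hEq)
    rw [Fin.mk.injEq] at h2
    dsimp only at h2
    simp only [Bool.cond_false, Bool.cond_true] at h2
    omega

/-- A matching of size `n` among the red neighbors of `c` gives a fan. -/
lemma containsFan_of_matchOn {V : Type*} (R : SimpleGraph V) (c : V) (S : Finset V) {n : ℕ}
    (hS : ∀ x ∈ S, R.Adj c x) (hm : MatchOn R S n) : ContainsFan R n := by
  obtain ⟨m, hinj, hmem, hadj⟩ := hm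
  refine ⟨⟨fun o => o.elim c m, ?_⟩, ?_⟩
  · rintro (_ | p) (_ | q) h
    · rfl
    · exact absurd ((hS _ (hmem q)).ne h) (fun hc => hc)
    · exact absurd ((hS _ (hmem p)).ne h.symm) (fun hc => hc)
    · exact congrArg some (hinj h)
  · rintro (_ | p) (_ | q) ⟨hne, hcase⟩
    · exact absurd rfl hne
    · exact hS _ (hmem q)
    · exact (hS _ (hmem p)).symm
    · rcases hcase with h | h | ⟨i, a, b, h1, h2⟩
      · exact absurd h (Option.some_ne_none p)
      · exact absurd h (Option.some_ne_none q)
      · obtain rfl : p = (i, a) := Option.some_injective _ h1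
        obtain rfl : q = (i, b) := Option.some_injective _ h2
        have hab : a ≠ b := fun hc => hne (by rw [hc])
        cases a <;> cases b
        · exact absurd rfl hab
        · exact hadj i
        · exact (hadj i).symm
        · exact absurd rfl hab

/-- Red neighbors of `x` inside the finset `B`. -/
def redNbrIn {V : Type*} [DecidableEq V] (R : SimpleGraph V) [DecidableRel R.Adj]
    (B : Finset V) (x : V) : Finset V := (B.erase x).filter (fun y => R.Adj x y)

lemma mem_redNbrIn {V : Type*} [DecidableEq V] {R : SimpleGraph V} [DecidableRel R.Adj]
    {B : Finset V} {x y : V} : y ∈ redNbrIn R B x ↔ y ∈ B ∧ y ≠ x ∧ R.Adj x y := by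
  unfold redNbrIn
  rw [Finset.mem_filter, Finset.mem_erase]
  tauto

lemma redNbrIn_subset {V : Type*} [DecidableEq V] (R : SimpleGraph V) [DecidableRel R.Adj]
    (B : Finset V) (x : V) : redNbrIn R B x ⊆ B.erase x := Finset.filter_subset _ _

/-- In an `(Fₙ, K₄)`-free red/blue coloring of `K_{6n}` (red subgraph `R`, blue
subgraph `Rᶜ`), every vertex has red degree between `2n - 1` and `2n + 1`, and
consequently blue degree between `4n - 2` and `4n`. -/
theorem degree_bounds_free_coloring (n : ℕ) (hn : 2 ≤ n)
    (R : SimpleGraph (Fin (6 * n))) [DecidableRel R.Adj]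
    (hfree : ¬ ContainsFan R n ∧ ¬ ContainsK4 Rᶜ) (v : Fin (6 * n)) :
    (2 * n - 1 ≤ R.degree v ∧ R.degree v ≤ 2 * n + 1) ∧
    (4 * n - 2 ≤ Rᶜ.degree v ∧ Rᶜ.degree v ≤ 4 * n) := by
  obtain ⟨hF, hK⟩ := hfree
  obtain ⟨k, rfl⟩ : ∃ k, n = k + 1 := ⟨n - 1, by omega⟩
  have hk : 1 ≤ k := by omega
  have hcompl : Rᶜ.degree v = Fintype.card (Fin (6 * (k + 1))) - 1 - R.degree v :=
    SimpleGraph.degree_compl R v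
  rw [Fintype.card_fin] at hcompl
  -- four pairwise nonadjacent vertices give a blue K₄
  have hblue4 : ∀ a b c d : Fin (6 * (k + 1)), a ≠ b → a ≠ c → a ≠ d → b ≠ c → b ≠ d → c ≠ d →
      ¬R.Adj a b → ¬R.Adj a c → ¬R.Adj a d → ¬R.Adj b c → ¬R.Adj b d → ¬R.Adj c d → False := by
    intro a b c d h1 h2 h3 h4 h5 h6 n1 n2 n3 n4 n5 n6
    exact hK ⟨a, b, c, d, (R.compl_adj _ _).mpr ⟨h1, n1⟩, (R.compl_adj _ _).mpr ⟨h2, n2⟩,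
      (R.compl_adj _ _).mpr ⟨h3, n3⟩, (R.compl_adj _ _).mpr ⟨h4, n4⟩, (R.compl_adj _ _).mpr ⟨h5, n5⟩,
      (R.compl_adj _ _).mpr ⟨h6, n6⟩⟩
  -- a red clique of size `2n+1` gives a fan
  have hclique_fan : ∀ C : Finset (Fin (6 * (k + 1))), 2 * (k + 1) + 1 ≤ C.card →
      (∀ x ∈ C, ∀ y ∈ C, x ≠ y → R.Adj x y) → False := by
    intro C hCcard hCcl
    obtain ⟨D, hDC, hDcard⟩ := Finset.exists_subset_card_eq hCcard
    have hDne : D.Nonempty := by rw [← Finset.card_pos, hDcard]; omega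
    obtain ⟨c0, hc0⟩ := hDne
    have hm : MatchOn R (D.erase c0) (k + 1) := by
      apply matchOn_of_clique
      · rw [Finset.card_erase_of_mem hc0, hDcard]; omega
      · intro x hx y hy hxy
        exact hCcl x (hDC (Finset.mem_of_mem_erase hx)) y (hDC (Finset.mem_of_mem_erase hy)) hxy
    exact hF (containsFan_of_matchOn R c0 _ (fun x hx =>
      hCcl c0 (hDC hc0) x (hDC (Finset.mem_of_mem_erase hx))
        (Finset.ne_of_mem_erase hx).symm) hm)
  -- upper bound on red degrees
  have hupper : ∀ w : Fin (6 * (k + 1)), R.degree w ≤ 2 * (k + 1) + 1 := by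
    intro w
    by_contra hbig
    push_neg at hbig
    rcases matchOn_or_indep R (R.neighborFinset w) k with hm | ⟨U, hUS, hUcard, hUind⟩
    · exact hF (containsFan_of_matchOn R w _
        (fun x hx => by rwa [SimpleGraph.mem_neighborFinset] at hx) hm)
    · have hdegeq : (R.neighborFinset w).card = R.degree w := rfl
      have h4 : 4 ≤ U.card := by omega
      obtain ⟨T, hTU, hT4⟩ := Finset.exists_subset_card_eq h4
      set e := T.orderIsoOfFin hT4 with he
      have hmem : ∀ i : Fin 4, (e i : Fin (6 * (k + 1))) ∈ U := fun i => hTU (e i).2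
      have hne : ∀ i j : Fin 4, i ≠ j → (e i : Fin (6 * (k + 1))) ≠ (e j) :=
        fun i j hij h => hij (e.injective (Subtype.ext h))
      exact hblue4 (e 0) (e 1) (e 2) (e 3)
        (hne 0 1 (by decide)) (hne 0 2 (by decide)) (hne 0 3 (by decide))
        (hne 1 2 (by decide)) (hne 1 3 (by decide)) (hne 2 3 (by decide))
        (hUind _ (hmem 0) _ (hmem 1)) (hUind _ (hmem 0) _ (hmem 2))
        (hUind _ (hmem 0) _ (hmem 3)) (hUind _ (hmem 1) _ (hmem 2))
        (hUind _ (hmem 1) _ (hmem 3)) (hUind _ (hmem 2) _ (hmem 3))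
  -- lower bound on the red degree of `v`
  have hlower : 2 * (k + 1) - 1 ≤ R.degree v := by
    by_contra hsmall
    push_neg at hsmall
    have hBbig : 4 * (k + 1) + 1 ≤ (Rᶜ.neighborFinset v).card := by
      have : (Rᶜ.neighborFinset v).card = Rᶜ.degree v := rfl
      omega
    obtain ⟨B, hBsub, hBcard⟩ := Finset.exists_subset_card_eq hBbig
    have hvB : ∀ x ∈ B, v ≠ x ∧ ¬R.Adj v x := by
      intro x hx
      have h := hBsub hx
      rw [SimpleGraph.mem_neighborFinset, SimpleGraph.compl_adj] at h
      exact h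
    have htri : ∀ x ∈ B, ∀ y ∈ B, ∀ z ∈ B, x ≠ y → x ≠ z → y ≠ z →
        ¬R.Adj x y → ¬R.Adj x z → ¬R.Adj y z → False := by
      intro x hx y hy z hz hxy hxz hyz nxy nxz nyz
      exact hblue4 v x y z (hvB x hx).1 (hvB y hy).1 (hvB z hz).1 hxy hxz hyz
        (hvB x hx).2 (hvB y hy).2 (hvB z hz).2 nxy nxz nyz
    -- the blue neighborhood (inside B) of any vertex of B is a red clique
    have hMBcl : ∀ x ∈ B, ∀ a ∈ (B.erase x) \ redNbrIn R B x,
        ∀ b ∈ (B.erase x) \ redNbrIn R B x, a ≠ b → R.Adj a b := by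
      intro x hx a ha b hb hab
      by_contra hnadj
      rw [Finset.mem_sdiff, Finset.mem_erase] at ha hb
      have hxa : ¬R.Adj x a := fun h => ha.2 (mem_redNbrIn.mpr ⟨ha.1.2, ha.1.1, h⟩)
      have hxb : ¬R.Adj x b := fun h => hb.2 (mem_redNbrIn.mpr ⟨hb.1.2, hb.1.1, h⟩)
      exact htri x hx a ha.1.2 b hb.1.2 (Ne.symm ha.1.1) (Ne.symm hb.1.1) hab hxa hxb hnadj
    -- every vertex of B has exactly 2n red neighbors inside B
    have hdeg : ∀ x ∈ B, (redNbrIn R B x).card = 2 * (k + 1) := by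
      intro x hx
      have hcardE : (B.erase x).card = 4 * (k + 1) := by
        rw [Finset.card_erase_of_mem hx, hBcard]; omega
      have hub : (redNbrIn R B x).card ≤ 2 * (k + 1) := by
        rcases matchOn_or_indep R (redNbrIn R B x) k with hm | ⟨U, hUS, hUcard, hUind⟩
        · exact (hF (containsFan_of_matchOn R x _
            (fun y hy => (mem_redNbrIn.mp hy).2.2) hm)).elim
        · by_contra hgt
          push_neg at hgt
          have h3 : 3 ≤ U.card := by omega
          obtain ⟨T, hTU, hT3⟩ := Finset.exists_subset_card_eq h3
          set e := T.orderIsoOfFin hT3 with he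
          have hmemB : ∀ i : Fin 3, (e i : Fin (6 * (k + 1))) ∈ B :=
            fun i => (mem_redNbrIn.mp (hUS (hTU (e i).2))).1
          have hmemU : ∀ i : Fin 3, (e i : Fin (6 * (k + 1))) ∈ U := fun i => hTU (e i).2
          have hne : ∀ i j : Fin 3, i ≠ j → (e i : Fin (6 * (k + 1))) ≠ (e j) :=
            fun i j hij h => hij (e.injective (Subtype.ext h))
          exact htri _ (hmemB 0) _ (hmemB 1) _ (hmemB 2)
            (hne 0 1 (by decide)) (hne 0 2 (by decide)) (hne 1 2 (by decide))
            (hUind _ (hmemU 0) _ (hmemU 1)) (hUind _ (hmemU 0) _ (hmemU 2))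
            (hUind _ (hmemU 1) _ (hmemU 2))
      have hlb : 2 * (k + 1) ≤ (redNbrIn R B x).card := by
        by_contra hlt
        push_neg at hlt
        refine hclique_fan ((B.erase x) \ redNbrIn R B x) ?_ (hMBcl x hx)
        have := Finset.card_sdiff_of_subset (redNbrIn_subset R B x)
        omega
      omega
    -- pick u ∈ B, its red and blue neighborhoods N and W inside B
    have hBne : B.Nonempty := by rw [← Finset.card_pos, hBcard]; omega
    obtain ⟨u, hu⟩ := hBne
    set N := redNbrIn R B u with hN
    set W := (B.erase u) \ N with hW
    have hNcard : N.card = 2 * (k + 1) := hdeg u hu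
    have hNmem : ∀ a, a ∈ N ↔ a ∈ B ∧ a ≠ u ∧ R.Adj u a := by
      intro a; rw [hN]; exact mem_redNbrIn
    have hWcard : W.card = 2 * (k + 1) := by
      rw [hW, Finset.card_sdiff_of_subset (by rw [hN]; exact redNbrIn_subset R B u),
        Finset.card_erase_of_mem hu, hBcard, hNcard]
      omega
    have hWmem : ∀ a, a ∈ W ↔ a ∈ B ∧ a ≠ u ∧ ¬R.Adj u a := by
      intro a
      rw [hW, Finset.mem_sdiff, Finset.mem_erase, hNmem a]
      constructor
      · rintro ⟨⟨h1, h2⟩, h3⟩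
        exact ⟨h2, h1, fun h => h3 ⟨h2, h1, h⟩⟩
      · rintro ⟨h1, h2, h3⟩
        exact ⟨⟨h2, h1⟩, fun h => h3 h.2.2⟩
    have hWcl : ∀ a ∈ W, ∀ b ∈ W, a ≠ b → R.Adj a b := hMBcl u hu
    -- pick w ∈ W; it has a unique red neighbor z outside W
    have hWne : W.Nonempty := by rw [← Finset.card_pos, hWcard]; omega
    obtain ⟨w, hw⟩ := hWne
    have hwB : w ∈ B := ((hWmem w).mp hw).1
    have hWsub : W.erase w ⊆ redNbrIn R B w := by
      intro a ha
      rw [Finset.mem_erase] at ha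
      exact mem_redNbrIn.mpr ⟨((hWmem a).mp ha.2).1, ha.1, hWcl w hw a ha.2 (Ne.symm ha.1)⟩
    have hz1 : ((redNbrIn R B w) \ W.erase w).card = 1 := by
      rw [Finset.card_sdiff_of_subset hWsub, hdeg w hwB, Finset.card_erase_of_mem hw, hWcard]
      omega
    obtain ⟨z, hzeq⟩ := Finset.card_eq_one.mp hz1
    have hzmem : z ∈ redNbrIn R B w \ W.erase w := by
      rw [hzeq]; exact Finset.mem_singleton_self z
    rw [Finset.mem_sdiff] at hzmem
    have hzred := mem_redNbrIn.mp hzmem.1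
    have hzW : z ∉ W := fun h => hzmem.2 (Finset.mem_erase.mpr ⟨hzred.2.1, h⟩)
    have hzu : z ≠ u := by
      intro h
      exact ((hWmem w).mp hw).2.2 (h ▸ hzred.2.2).symm
    have hzN : z ∈ N := by
      rw [hNmem z]
      refine ⟨hzred.1, hzu, ?_⟩
      by_contra hna
      exact hzW ((hWmem z).mpr ⟨hzred.1, hzu, hna⟩)
    have huniq : ∀ t, t ∈ redNbrIn R B w → t ∉ W.erase w → t = z := by
      intro t h1 h2
      have ht : t ∈ redNbrIn R B w \ W.erase w := Finset.mem_sdiff.mpr ⟨h1, h2⟩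
      rw [hzeq, Finset.mem_singleton] at ht
      exact ht
    -- N.erase z is a red clique (it lies in the blue neighborhood of w)
    have hNcl : ∀ a ∈ N.erase z, ∀ b ∈ N.erase z, a ≠ b → R.Adj a b := by
      have key : ∀ c ∈ N.erase z, c ∈ (B.erase w) \ redNbrIn R B w := by
        intro c hc
        rw [Finset.mem_erase] at hc
        have hcN := (hNmem c).mp hc.2
        have hcW : c ∉ W := fun h => ((hWmem c).mp h).2.2 hcN.2.2
        have hcw : c ≠ w := fun h => hcW (h ▸ hw)
        rw [Finset.mem_sdiff, Finset.mem_erase]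
        refine ⟨⟨hcw, hcN.1⟩, ?_⟩
        intro hcr
        exact hc.1 (huniq c hcr (fun h => hcW (Finset.mem_of_mem_erase h)))
      intro a ha b hb hab
      exact hMBcl w hwB a (key a ha) b (key b hb) hab
    -- z has no red neighbor in N.erase z
    have hzblue : ∀ t ∈ N.erase z, ¬R.Adj z t := by
      intro t ht hzt
      have hcl2 : ∀ x ∈ (N.erase z).erase t, ∀ y ∈ (N.erase z).erase t, x ≠ y → R.Adj x y :=
        fun x hx y hy => hNcl x (Finset.mem_of_mem_erase hx) y (Finset.mem_of_mem_erase hy)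
      have hcard2 : ((N.erase z).erase t).card = 2 * k := by
        rw [Finset.card_erase_of_mem ht, Finset.card_erase_of_mem hzN, hNcard]
        omega
      have hm := matchOn_of_clique R _ k hcard2 hcl2
      have hznot : z ∉ (N.erase z).erase t :=
        fun h => (Finset.mem_erase.mp (Finset.mem_of_mem_erase h)).1 rfl
      have htnot : t ∉ (N.erase z).erase t := fun h => (Finset.mem_erase.mp h).1 rfl
      have hm2 := matchOn_extend hm hzt hznot htnot
      apply hF
      apply containsFan_of_matchOn R u _ _ hm2
      intro x hx
      rw [Finset.mem_insert, Finset.mem_insert] at hx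
      rcases hx with h | h | hx
      · exact h ▸ ((hNmem z).mp hzN).2.2
      · exact h ▸ ((hNmem t).mp (Finset.mem_of_mem_erase ht)).2.2
      · exact ((hNmem x).mp (Finset.mem_of_mem_erase (Finset.mem_of_mem_erase hx))).2.2
    -- z has no red neighbor in W other than w
    have hzWblue : ∀ w' ∈ W.erase w, ¬R.Adj z w' := by
      intro w' hw' hzw'
      have hw'W : w' ∈ W := Finset.mem_of_mem_erase hw'
      have hw'ne : w' ≠ w := (Finset.mem_erase.mp hw').1
      have hcl2 : ∀ x ∈ (W.erase w).erase w', ∀ y ∈ (W.erase w).erase w', x ≠ y → R.Adj x y :=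
        fun x hx y hy => hWcl x (Finset.mem_of_mem_erase (Finset.mem_of_mem_erase hx))
          y (Finset.mem_of_mem_erase (Finset.mem_of_mem_erase hy))
      have hcard2 : ((W.erase w).erase w').card = 2 * k := by
        rw [Finset.card_erase_of_mem hw', Finset.card_erase_of_mem hw, hWcard]
        omega
      have hm := matchOn_of_clique R _ k hcard2 hcl2
      have hznot : z ∉ (W.erase w).erase w' :=
        fun h => hzW (Finset.mem_of_mem_erase (Finset.mem_of_mem_erase h))
      have hw'not : w' ∉ (W.erase w).erase w' := fun h => (Finset.mem_erase.mp h).1 rfl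
      have hm2 := matchOn_extend hm hzw' hznot hw'not
      apply hF
      apply containsFan_of_matchOn R w _ _ hm2
      intro x hx
      rw [Finset.mem_insert, Finset.mem_insert] at hx
      rcases hx with h | h | hx
      · exact h ▸ hzred.2.2
      · exact h ▸ hWcl w hw w' hw'W (Ne.symm hw'ne)
      · exact hWcl w hw x (Finset.mem_of_mem_erase (Finset.mem_of_mem_erase hx))
          (Ne.symm (Finset.mem_erase.mp (Finset.mem_of_mem_erase hx)).1)
    -- so z has red degree at most 2 inside B: contradiction
    have hfinal : redNbrIn R B z ⊆ {u, w} := by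
      intro x hx
      have hxm := mem_redNbrIn.mp hx
      rw [Finset.mem_insert, Finset.mem_singleton]
      by_contra hc
      push_neg at hc
      by_cases hxN : x ∈ N
      · exact hzblue x (Finset.mem_erase.mpr ⟨hxm.2.1, hxN⟩) hxm.2.2
      · have hxW : x ∈ W := (hWmem x).mpr
          ⟨hxm.1, hc.1, fun h => hxN ((hNmem x).mpr ⟨hxm.1, hc.1, h⟩)⟩
        exact hzWblue x (Finset.mem_erase.mpr ⟨hc.2, hxW⟩) hxm.2.2
    have hle2 : ({u, w} : Finset (Fin (6 * (k + 1)))).card ≤ 2 := by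
      refine le_trans (Finset.card_insert_le _ _) ?_
      simp
    have hzcard := hdeg z hzred.1
    have := Finset.card_le_card hfinal
    omega
  have hup := hupper v
  refine ⟨⟨hlower, hup⟩, ?_, ?_⟩ <;> omega
end

section
/- Let n ≥ 2 be an integer, let K_{6n} be given a red/blue edge-coloring that is (F_n, K_4)-free, and suppose there is a set K of 2n vertices all of whose internal edges are red (a red clique of order 2n). Then the coloring restricted to the remaining 4n vertices (those outside K) contains no blue triangle. -/
open SimpleGraph

lemma fan_of_two_red (n : ℕ) (hn : 2 ≤ n) {R : SimpleGraph (Fin (6 * n))}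
    {K : Finset (Fin (6 * n))} (hKcard : K.card = 2 * n) (hKred : R.IsClique ↑K)
    {x u w : Fin (6 * n)} (hx : x ∉ K) (hu : u ∈ K) (hw : w ∈ K) (huw : u ≠ w)
    (hxu : R.Adj x u) (hxw : R.Adj x w) :
    ∃ f : Option (Fin n × Bool) ↪ Fin (6 * n),
      ∀ p q, (p ≠ q ∧ (p = none ∨ q = none ∨ ∃ i a b, p = some (i, a) ∧ q = some (i, b)))
        → R.Adj (f p) (f q) := by
  classical
  set S := (K.erase u).erase w with hS
  have hwu : w ∈ K.erase u := Finset.mem_erase.mpr ⟨huw.symm, hw⟩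
  have hScard : S.card = 2 * n - 2 := by
    rw [hS, Finset.card_erase_of_mem hwu, Finset.card_erase_of_mem hu, hKcard]; omega
  let e := S.orderIsoOfFin hScard
  have heS : ∀ k, (e k : Fin (6 * n)) ∈ S := fun k => (e k).2
  have heK : ∀ k, (e k : Fin (6 * n)) ∈ K := fun k =>
    Finset.mem_of_mem_erase (Finset.mem_of_mem_erase (heS k))
  have heu : ∀ k, (e k : Fin (6 * n)) ≠ u := fun k =>
    Finset.ne_of_mem_erase (Finset.mem_of_mem_erase (heS k))
  have hew : ∀ k, (e k : Fin (6 * n)) ≠ w := fun k =>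
    Finset.ne_of_mem_erase (heS k)
  have hex : ∀ k, (e k : Fin (6 * n)) ≠ x := fun k h => hx (h ▸ heK k)
  have einj : ∀ k k', (e k : Fin (6 * n)) = e k' → k = k' := fun k k' h =>
    e.injective (Subtype.ext h)
  have hidx : ∀ (i : Fin n) (a : Bool), (i : ℕ) < n - 1 →
      2 * (i : ℕ) + (if a then 1 else 0) < 2 * n - 2 := by
    intro i a h; cases a <;> simp <;> omega
  have hux : u ≠ x := fun h => hx (h ▸ hu)
  have hwx : w ≠ x := fun h => hx (h ▸ hw)
  let g : Option (Fin n × Bool) → Fin (6 * n) := fun o =>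
    match o with
    | none => u
    | some (i, a) =>
        if h : (i : ℕ) < n - 1 then (e ⟨2 * i + (if a then 1 else 0), hidx i a h⟩ : Fin (6 * n))
        else if a then w else x
  have gval : ∀ (i : Fin n) (a : Bool), g (some (i, a)) =
      if h : (i : ℕ) < n - 1 then (e ⟨2 * i + (if a then 1 else 0), hidx i a h⟩ : Fin (6 * n))
      else if a then w else x := fun _ _ => rfl
  have gnu : ∀ (i : Fin n) (a : Bool), g (some (i, a)) ≠ u := by
    intro i a
    rw [gval]
    by_cases hi : (i : ℕ) < n - 1
    · rw [dif_pos hi]; exact heu _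
    · rw [dif_neg hi]; cases a
      · simpa using hux.symm
      · simpa using huw.symm
  have hginj : Function.Injective g := by
    rintro (_ | ⟨i, a⟩) (_ | ⟨j, b⟩) h
    · rfl
    · exact absurd h.symm (gnu _ _)
    · exact absurd h (gnu _ _)
    · rw [gval, gval] at h
      by_cases hi : (i : ℕ) < n - 1 <;> by_cases hj : (j : ℕ) < n - 1
      · rw [dif_pos hi, dif_pos hj] at h
        have h2 := Fin.val_eq_of_eq (einj _ _ h)
        simp only at h2
        have : (i : ℕ) = j ∧ a = b := by
          cases a <;> cases b <;> simp at h2 ⊢ <;> omega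
        simp [Prod.ext_iff, Fin.ext_iff, this.1, this.2]
      · exfalso
        rw [dif_pos hi, dif_neg hj] at h
        cases b
        · exact hex _ (by simpa using h)
        · exact hew _ (by simpa using h)
      · exfalso
        rw [dif_neg hi, dif_pos hj] at h
        cases a
        · exact hex _ (by simpa using h.symm)
        · exact hew _ (by simpa using h.symm)
      · rw [dif_neg hi, dif_neg hj] at h
        have hab : a = b := by
          cases a <;> cases b
          · rfl
          · exact absurd (by simpa using h) hwx.symm
          · exact absurd (by simpa using h) hwx
          · rfl
        have hij : (i : ℕ) = j := by omega
        simp [Prod.ext_iff, Fin.ext_iff, hij, hab]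
  refine ⟨⟨g, hginj⟩, ?_⟩
  have red : ∀ y z, y ∈ K → z ∈ K → y ≠ z → R.Adj y z := fun y z hy hz hyz =>
    hKred hy hz hyz
  have gadjc : ∀ (i : Fin n) (a : Bool), R.Adj u (g (some (i, a))) := by
    intro i a
    rw [gval]
    by_cases hi : (i : ℕ) < n - 1
    · rw [dif_pos hi]; exact red _ _ hu (heK _) (heu _).symm
    · rw [dif_neg hi]; cases a
      · simpa using hxu.symm
      · simpa using red u w hu hw huw
  rintro p q ⟨hpq, hcase⟩
  rcases hcase with h | h | ⟨i, a, b, hp, hq⟩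
  · subst h
    obtain ⟨⟨i, a⟩, rfl⟩ : ∃ ia : Fin n × Bool, q = some ia := by
      cases q with
      | none => exact absurd rfl hpq
      | some ia => exact ⟨ia, rfl⟩
    exact gadjc i a
  · subst h
    obtain ⟨⟨i, a⟩, rfl⟩ : ∃ ia : Fin n × Bool, p = some ia := by
      cases p with
      | none => exact absurd rfl hpq
      | some ia => exact ⟨ia, rfl⟩
    exact (gadjc i a).symm
  · subst hp; subst hq
    have hab : a ≠ b := fun h => hpq (by rw [h])
    show R.Adj (g (some (i, a))) (g (some (i, b)))
    rw [gval, gval]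
    by_cases hi : (i : ℕ) < n - 1
    · rw [dif_pos hi, dif_pos hi]
      refine red _ _ (heK _) (heK _) ?_
      intro h
      have h2 := Fin.val_eq_of_eq (einj _ _ h)
      simp only at h2
      cases a <;> cases b <;> simp at h2 hab <;> omega
    · rw [dif_neg hi, dif_neg hi]
      cases a <;> cases b
      · exact absurd rfl hab
      · simpa using hxw
      · simpa using hxw.symm
      · exact absurd rfl hab

/-- If an `(Fₙ, K₄)`-free coloring of `K_{6n}` (`n ≥ 2`) contains a red clique `K`
of order `2n`, then there is no blue triangle among the vertices outside `K`. -/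
theorem no_blue_triangle_outside (n : ℕ) (hn : 2 ≤ n)
    (R : SimpleGraph (Fin (6 * n)))
    (hfree : ¬ ContainsFan R n ∧ ¬ ContainsK4 Rᶜ)
    (K : Finset (Fin (6 * n))) (hKcard : K.card = 2 * n) (hKred : R.IsClique ↑K) :
    ∀ a b c : Fin (6 * n), a ∉ K → b ∉ K → c ∉ K →
      ¬ (Rᶜ.Adj a b ∧ Rᶜ.Adj a c ∧ Rᶜ.Adj b c) := by
  classical
  intro a b c ha hb hc
  rintro ⟨hab, hac, hbc⟩
  obtain ⟨hfan, hk4⟩ := hfree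
  have key : ∀ x, x ∉ K → (K.filter (fun k => R.Adj x k)).card ≤ 1 := by
    intro x hx
    by_contra hcard
    push_neg at hcard
    obtain ⟨u, hu, w, hw, huw⟩ := Finset.one_lt_card.mp hcard
    rw [Finset.mem_filter] at hu hw
    exact hfan (fan_of_two_red n hn hKcard hKred hx hu.1 hw.1 huw hu.2 hw.2)
  set P : Fin (6 * n) → Prop := fun k => ¬ R.Adj a k ∧ ¬ R.Adj b k ∧ ¬ R.Adj c k with hP
  have hsub : K.filter (fun k => ¬ P k) ⊆
      (K.filter (fun k => R.Adj a k)) ∪ (K.filter (fun k => R.Adj b k)) ∪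
        (K.filter (fun k => R.Adj c k)) := by
    intro k hk
    rw [Finset.mem_filter] at hk
    simp only [hP, not_and_or, not_not] at hk
    simp only [Finset.mem_union, Finset.mem_filter]
    tauto
  have hcard2 : (K.filter (fun k => ¬ P k)).card ≤ 3 := by
    calc (K.filter (fun k => ¬ P k)).card
        ≤ ((K.filter (fun k => R.Adj a k)) ∪ (K.filter (fun k => R.Adj b k)) ∪
            (K.filter (fun k => R.Adj c k))).card := Finset.card_le_card hsub
      _ ≤ _ := by
          refine le_trans (Finset.card_union_le _ _) ?_
          have := Finset.card_union_le (K.filter (fun k => R.Adj a k))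
            (K.filter (fun k => R.Adj b k))
          have h1 := key a ha
          have h2 := key b hb
          have h3 := key c hc
          omega
  have hfp : (K.filter P).card + (K.filter (fun k => ¬ P k)).card = K.card :=
    Finset.card_filter_add_card_filter_not (p := P)
  have hpos : 0 < (K.filter P).card := by omega
  obtain ⟨k, hk⟩ := Finset.card_pos.mp hpos
  rw [Finset.mem_filter] at hk
  obtain ⟨hkK, hka, hkb, hkc⟩ := hk
  have hkna : k ≠ a := fun h => ha (h ▸ hkK)
  have hknb : k ≠ b := fun h => hb (h ▸ hkK)
  have hknc : k ≠ c := fun h => hc (h ▸ hkK)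
  exact hk4 ⟨k, a, b, c,
    ⟨hkna, fun h => hka h.symm⟩, ⟨hknb, fun h => hkb h.symm⟩, ⟨hknc, fun h => hkc h.symm⟩,
    hab, hac, hbc⟩
end

section
/- Let n ≥ 4 be an integer, let K_{6n} be given a red/blue edge-coloring that is (F_n, K_4)-free, and suppose there is a set K of 2n vertices all of whose internal edges are red. If C_t is a shortest blue cycle of odd length among the vertices outside K, then t = 5 or t = 7. -/
open SimpleGraph

variable {V : Type*}

/-- A red matching of size `m` around center `z`. -/
def IsRedMatching (R : SimpleGraph V) (z : V) (m : ℕ) (g : Fin m × Bool → V) : Prop :=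
  Function.Injective g ∧ (∀ x, R.Adj z (g x)) ∧ ∀ i, R.Adj (g (i, false)) (g (i, true))

lemma containsFan_of_matching {R : SimpleGraph V} {n : ℕ} {z : V} {g : Fin n × Bool → V}
    (hg : IsRedMatching R z n g) : ContainsFan R n := by
  obtain ⟨hinj, hzg, hpair⟩ := hg
  have hzne : ∀ x, z ≠ g x := fun x => (hzg x).ne
  refine ⟨⟨fun o => o.elim z g, ?_⟩, ?_⟩
  · rintro (_ | x) (_ | y) h
    · rfl
    · exact absurd h (hzne y)
    · exact absurd h.symm (hzne x)
    · exact congrArg some (hinj h)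
  · rintro u v ⟨hne, h⟩
    rcases h with h | h | ⟨i, a, b, hu, hv⟩
    · subst h
      cases v with
      | none => exact absurd rfl hne
      | some y => exact hzg y
    · subst h
      cases u with
      | none => exact absurd rfl hne
      | some y => exact (hzg y).symm
    · subst hu; subst hv
      have hab : a ≠ b := fun h => hne (by rw [h])
      cases a <;> cases b <;> simp at hab ⊢
      · exact hpair i
      · exact (hpair i).symm

lemma isRedMatching_combine {R : SimpleGraph V} {z : V} {m1 m2 m : ℕ}
    {g1 : Fin m1 × Bool → V} {g2 : Fin m2 × Bool → V}
    (h1 : IsRedMatching R z m1 g1) (h2 : IsRedMatching R z m2 g2)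
    (hd : ∀ x y, g1 x ≠ g2 y) (hm : m1 + m2 = m) :
    ∃ g : Fin m × Bool → V, IsRedMatching R z m g ∧
      ∀ x, (∃ y, g x = g1 y) ∨ (∃ y, g x = g2 y) := by
  subst hm
  refine ⟨fun x => if h : (x.1 : ℕ) < m1 then g1 (⟨x.1, h⟩, x.2)
    else g2 (⟨(x.1 : ℕ) - m1, by omega⟩, x.2), ⟨?_, ?_, ?_⟩, ?_⟩
  · rintro ⟨a, b⟩ ⟨a', b'⟩ h
    by_cases h1' : (a : ℕ) < m1 <;> by_cases h2' : (a' : ℕ) < m1 <;>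
      simp only [h1', h2', dif_pos, dif_neg, not_false_iff] at h
    · have h' := h1.1 h
      simp only [Prod.ext_iff, Fin.ext_iff] at h' ⊢
      exact h' 
    · exact absurd h (hd _ _)
    · exact absurd h.symm (hd _ _)
    · have h' := h2.1 h
      have ha := a.isLt; have ha' := a'.isLt
      simp only [Prod.ext_iff, Fin.ext_iff] at h' ⊢
      exact ⟨by omega, h'.2⟩
  · rintro ⟨a, b⟩
    by_cases h' : (a : ℕ) < m1 <;> simp only [h', dif_pos, dif_neg, not_false_iff]
    · exact h1.2.1 _
    · exact h2.2.1 _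
  · rintro a
    by_cases h' : (a : ℕ) < m1 <;> simp only [h', dif_pos, dif_neg, not_false_iff]
    · exact h1.2.2 _
    · exact h2.2.2 _
  · rintro ⟨a, b⟩
    by_cases h' : (a : ℕ) < m1 <;> simp only [h', dif_pos, dif_neg, not_false_iff]
    · exact Or.inl ⟨_, rfl⟩
    · exact Or.inr ⟨_, rfl⟩

open Finset in
lemma cliqueMatching [DecidableEq V] (R : SimpleGraph V) (s : Finset V)
    (hclique : ∀ x ∈ s, ∀ y ∈ s, x ≠ y → R.Adj x y) (z : V) (hz : ∀ x ∈ s, R.Adj z x)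
    (m : ℕ) (hm : 2 * m ≤ s.card) :
    ∃ g : Fin m × Bool → V, IsRedMatching R z m g ∧ ∀ x, g x ∈ s := by
  obtain ⟨t, hts, htc⟩ := Finset.exists_subset_card_eq hm
  have e : Fin (2 * m) ≃ t := (t.equivFin.trans (finCongr htc)).symm
  set φ : Fin (2 * m) → V := fun i => (e i : V) with hφ
  have hφinj : Function.Injective φ := fun a b h => e.injective (Subtype.ext h)
  have hφmem : ∀ i, φ i ∈ s := fun i => hts (e i).2
  refine ⟨fun x => φ ⟨2 * (x.1 : ℕ) + (if x.2 = true then 1 else 0), by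
      have := x.1.isLt; split <;> omega⟩, ⟨?_, ?_, ?_⟩, fun x => hφmem _⟩
  · rintro ⟨a, b⟩ ⟨a', b'⟩ h
    have h' := hφinj h
    simp only [Fin.mk.injEq] at h'
    cases b <;> cases b' <;> simp at h' <;> simp [Prod.ext_iff, Fin.ext_iff] <;> omega
  · exact fun x => hz _ (hφmem _)
  · intro i
    refine hclique _ (hφmem _) _ (hφmem _) (fun h => ?_)
    have := hφinj h
    simp only [Fin.mk.injEq] at this
    simp at this

open Finset in
lemma matching_or_triangle [DecidableEq V] (R : SimpleGraph V) :
    ∀ (m : ℕ) (D : Finset V), 2 * m + 3 ≤ D.card →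
    (∃ g : Fin m × Bool → V, Function.Injective g ∧ (∀ x, g x ∈ D) ∧
      ∀ i, R.Adj (g (i, false)) (g (i, true)))
    ∨ (∃ x y z, x ∈ D ∧ y ∈ D ∧ z ∈ D ∧ Rᶜ.Adj x y ∧ Rᶜ.Adj x z ∧ Rᶜ.Adj y z) := by
  intro m
  induction m with
  | zero =>
    intro D _
    exact Or.inl ⟨fun x => absurd x.1.isLt (by simp), fun x => absurd x.1.isLt (by simp),
      fun x => absurd x.1.isLt (by simp), fun i => absurd i.isLt (by simp)⟩
  | succ m ih =>
    intro D hD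
    by_cases hred : ∃ x ∈ D, ∃ y ∈ D, x ≠ y ∧ R.Adj x y
    · obtain ⟨x, hx, y, hy, hxy, hadj⟩ := hred
      have hyx : y ∈ D.erase x := Finset.mem_erase.mpr ⟨Ne.symm hxy, hy⟩
      have hD' : 2 * m + 3 ≤ ((D.erase x).erase y).card := by
        have h1 : (D.erase x).card = D.card - 1 := Finset.card_erase_of_mem hx
        have h2 : ((D.erase x).erase y).card = (D.erase x).card - 1 :=
          Finset.card_erase_of_mem hyx
        have h3 : D.card ≥ 2 * m + 5 := hD
        omega
      rcases ih _ hD' with ⟨g, hginj, hgmem, hgpair⟩ | ⟨a, b, c, ha, hb, hc, h1, h2, h3⟩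
      · refine Or.inl ⟨fun p => if h : (p.1 : ℕ) < m then g (⟨p.1, h⟩, p.2)
          else (if p.2 = true then y else x), ?_, ?_, ?_⟩
        · rintro ⟨a, b⟩ ⟨a', b'⟩ h
          have hgD : ∀ q, g q ≠ x ∧ g q ≠ y := fun q =>
            ⟨fun h => (Finset.mem_erase.mp (Finset.mem_erase.mp (hgmem q)).2).1 h,
             fun h => (Finset.mem_erase.mp (hgmem q)).1 h⟩
          by_cases ha1 : (a : ℕ) < m <;> by_cases ha2 : (a' : ℕ) < m <;>
            simp only [ha1, ha2, dif_pos, dif_neg, not_false_iff] at h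
          · have h' := hginj h
            simp only [Prod.ext_iff, Fin.ext_iff] at h' ⊢
            exact h'
          · exact absurd h (by cases b' <;> simp [(hgD _).1, (hgD _).2])
          · exact absurd h.symm (by cases b <;> simp [(hgD _).1, (hgD _).2])
          · have h1 := a.isLt; have h2 := a'.isLt
            have hb : b = b' := by
              cases b <;> cases b' <;> simp at h <;> first
                | rfl | exact absurd h.symm hxy | exact absurd h hxy
            simp only [Prod.ext_iff, Fin.ext_iff]
            exact ⟨by omega, hb⟩
        · rintro ⟨a, b⟩
          by_cases ha1 : (a : ℕ) < m <;> simp only [ha1, dif_pos, dif_neg, not_false_iff]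
          · exact Finset.mem_of_mem_erase (Finset.mem_of_mem_erase (hgmem _))
          · split
            · exact hy
            · exact hx
        · intro i
          by_cases ha1 : (i : ℕ) < m <;> simp only [ha1, dif_pos, dif_neg, not_false_iff]
          · exact hgpair _
          · simpa using hadj
      · exact Or.inr ⟨a, b, c, Finset.mem_of_mem_erase (Finset.mem_of_mem_erase ha),
          Finset.mem_of_mem_erase (Finset.mem_of_mem_erase hb),
          Finset.mem_of_mem_erase (Finset.mem_of_mem_erase hc), h1, h2, h3⟩
    · push_neg at hred
      obtain ⟨a, ha, b, hb, c, hc, hab, hac, hbc⟩ := Finset.two_lt_card.mp (show 2 < D.card by omega)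
      exact Or.inr ⟨a, b, c, ha, hb, hc, ⟨hab, fun h => (hred a ha b hb hab) h⟩,
        ⟨hac, fun h => (hred a ha c hc hac) h⟩, ⟨hbc, fun h => (hred b hb c hc hbc) h⟩⟩

/-- Key principle: no vertex outside the red `2n`-clique `K` has two red neighbours in `K`. -/
lemma no_two_red [DecidableEq V] {n : ℕ} (hn : 4 ≤ n) {R : SimpleGraph V}
    (hfan : ¬ ContainsFan R n) {K : Finset V} (hKcard : K.card = 2 * n)
    (hKred : R.IsClique ↑K) :
    ∀ v ∉ K, ∀ k1 ∈ K, ∀ k2 ∈ K, k1 ≠ k2 → R.Adj v k1 → R.Adj v k2 → False := by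
  intro v hv k1 hk1 k2 hk2 hne h1 h2
  apply hfan
  have hcl : ∀ x ∈ K, ∀ y ∈ K, x ≠ y → R.Adj x y := fun x hx y hy hxy => hKred hx hy hxy
  -- matching of size 1 : the pair (v, k2), center k1
  have hm1 : IsRedMatching R k1 1 (fun x => if x.2 = true then k2 else v) := by
    refine ⟨?_, ?_, ?_⟩
    · rintro ⟨a, b⟩ ⟨a', b'⟩ h
      have hvk2 : v ≠ k2 := fun h => hv (h ▸ hk2)
      cases b <;> cases b' <;> simp at h <;>
        simp [Prod.ext_iff, Fin.ext_iff, Fin.val_eq_zero a, Fin.val_eq_zero a'] <;>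
        first | rfl | exact absurd h.symm hvk2 | exact absurd h hvk2
    · rintro ⟨a, b⟩
      cases b <;> simp
      · exact h1.symm
      · exact hcl _ hk1 _ hk2 hne
    · intro i; simpa using h2
  -- matching of size n-1 inside K \ {k1, k2}
  set E : Finset V := (K.erase k1).erase k2 with hE
  have hEcard : E.card = 2 * n - 2 := by
    have hk2' : k2 ∈ K.erase k1 := Finset.mem_erase.mpr ⟨Ne.symm hne, hk2⟩
    rw [hE, Finset.card_erase_of_mem hk2', Finset.card_erase_of_mem hk1, hKcard]
    omega
  have hEK : ∀ x ∈ E, x ∈ K := fun x hx =>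
    Finset.mem_of_mem_erase (Finset.mem_of_mem_erase hx)
  obtain ⟨g2, hg2, hg2mem⟩ := cliqueMatching R E
    (fun x hx y hy hxy => hcl x (hEK x hx) y (hEK y hy) hxy) k1
    (fun x hx => hcl _ hk1 _ (hEK x hx) (fun h => (Finset.mem_erase.mp
      (Finset.mem_erase.mp hx).2).1 h.symm)) (n - 1) (by omega)
  obtain ⟨g, hg, -⟩ := isRedMatching_combine hm1 hg2 (fun x y => by
    have hy := hg2mem y
    have hyne1 : g2 y ≠ k2 := fun h => (Finset.mem_erase.mp (hE ▸ hy)).1 h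
    have hyK : g2 y ∈ K := hEK _ hy
    cases x.2 <;> simp
    · exact fun h => hv (h ▸ hyK)
    · exact fun h => hyne1 h.symm) (by omega : 1 + (n - 1) = n)
  exact containsFan_of_matching hg

/-- There is no blue triangle among the vertices outside `K`. -/
lemma no_blue_triangle [DecidableEq V] {n : ℕ} (hn : 4 ≤ n) {R : SimpleGraph V}
    (hfan : ¬ ContainsFan R n) (hK4 : ¬ ContainsK4 Rᶜ) {K : Finset V}
    (hKcard : K.card = 2 * n) (hKred : R.IsClique ↑K) :
    ∀ x y z, x ∉ K → y ∉ K → z ∉ K → Rᶜ.Adj x y → Rᶜ.Adj x z → Rᶜ.Adj y z → False := by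
  intro x y z hx hy hz hxy hxz hyz
  classical
  have hdom : ∀ k ∈ K, R.Adj k x ∨ R.Adj k y ∨ R.Adj k z := by
    intro k hk
    by_contra hcon
    push_neg at hcon
    obtain ⟨hc1, hc2, hc3⟩ := hcon
    refine hK4 ⟨k, x, y, z, ⟨fun h => hx (h ▸ hk), hc1⟩, ⟨fun h => hy (h ▸ hk), hc2⟩,
      ⟨fun h => hz (h ▸ hk), hc3⟩, hxy, hxz, hyz⟩
  have hsub : K ⊆ (K.filter (fun k => R.Adj k x)) ∪ (K.filter (fun k => R.Adj k y)) ∪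
      (K.filter (fun k => R.Adj k z)) := by
    intro k hk
    rcases hdom k hk with h | h | h <;> simp [Finset.mem_union, Finset.mem_filter, hk, h]
  have hcard1 : ∀ w, w ∉ K → (K.filter (fun k => R.Adj k w)).card ≤ 1 := by
    intro w hw
    refine Finset.card_le_one.mpr (fun a ha b hb => ?_)
    by_contra hab
    obtain ⟨haK, haw⟩ := Finset.mem_filter.mp ha
    obtain ⟨hbK, hbw⟩ := Finset.mem_filter.mp hb
    exact no_two_red hn hfan hKcard hKred w hw a haK b hbK hab haw.symm hbw.symm
  have hle : K.card ≤ 3 := by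
    have hA := Finset.card_le_card hsub
    have hB := Finset.card_union_le ((K.filter (fun k => R.Adj k x)) ∪
      (K.filter (fun k => R.Adj k y))) (K.filter (fun k => R.Adj k z))
    have hC := Finset.card_union_le (K.filter (fun k => R.Adj k x))
      (K.filter (fun k => R.Adj k y))
    have hx1 := hcard1 x hx
    have hy1 := hcard1 y hy
    have hz1 := hcard1 z hz
    omega
  omega

namespace ShortCycle
open SimpleGraph Walk

def buildWalk (G : SimpleGraph V) (f : ℕ → V) :
    (m : ℕ) → (∀ k, k < m → G.Adj (f k) (f (k + 1))) → G.Walk (f 0) (f m)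
  | 0, _ => Walk.nil
  | (m + 1), h => (buildWalk G f m (fun k hk => h k (Nat.lt_succ_of_lt hk))).concat
      (h m (Nat.lt_succ_self m))

lemma buildWalk_length (G : SimpleGraph V) (f : ℕ → V) (m : ℕ) (h) :
    (buildWalk G f m h).length = m := by
  induction m with
  | zero => rfl
  | succ m ih => rw [buildWalk, Walk.length_concat, ih]

lemma buildWalk_support (G : SimpleGraph V) (f : ℕ → V) (m : ℕ) (h) :
    (buildWalk G f m h).support = (List.range (m + 1)).map f := by
  induction m with
  | zero => rfl
  | succ m ih =>
    rw [buildWalk, Walk.support_concat, ih, List.range_succ (n := m + 1), List.map_append]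
    simp [List.concat_eq_append]

lemma buildWalk_edges (G : SimpleGraph V) (f : ℕ → V) (m : ℕ) (h) :
    (buildWalk G f m h).edges = (List.range m).map (fun k => s(f k, f (k + 1))) := by
  induction m with
  | zero => rfl
  | succ m ih =>
    rw [buildWalk, Walk.edges_concat, ih, List.range_succ (n := m), List.map_append]
    simp [List.concat_eq_append]

lemma exists_cycle (G : SimpleGraph V) (f : ℕ → V) (m : ℕ) (hm : 2 ≤ m)
    (hadj : ∀ k, k < m → G.Adj (f k) (f (k + 1))) (hclose : G.Adj (f m) (f 0))
    (hinj : ∀ a, a ≤ m → ∀ b, b ≤ m → f a = f b → a = b) :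
    ∃ (u : V) (d : G.Walk u u), d.IsCycle ∧ d.length = m + 1 ∧
      ∀ x ∈ d.support, ∃ k, k ≤ m ∧ x = f k := by
  set p : G.Walk (f 0) (f m) := buildWalk G f m hadj with hp
  refine ⟨f m, Walk.cons hclose p, ?_, ?_, ?_⟩
  · rw [Walk.cons_isCycle_iff]
    constructor
    · rw [Walk.isPath_def, hp, buildWalk_support]
      refine List.Nodup.map_on ?_ List.nodup_range
      intro a ha b hb hab
      exact hinj a (by simpa using Nat.lt_succ_iff.mp (List.mem_range.mp ha)) b
        (by simpa using Nat.lt_succ_iff.mp (List.mem_range.mp hb)) hab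
    · rw [hp, buildWalk_edges]
      intro hmem
      obtain ⟨k, hk, hkeq⟩ := List.mem_map.mp hmem
      have hk' := List.mem_range.mp hk
      rw [Sym2.eq_iff] at hkeq
      rcases hkeq with ⟨e1, e2⟩ | ⟨e1, e2⟩
      · have := hinj k (by omega) m le_rfl e1
        omega
      · have h1 := hinj k (by omega) 0 (by omega) e1
        have h2 := hinj (k + 1) (by omega) m le_rfl e2
        omega
  · rw [Walk.length_cons, hp, buildWalk_length]
  · intro x hx
    rw [Walk.support_cons] at hx
    rcases List.mem_cons.mp hx with h | h
    · exact ⟨m, le_rfl, h⟩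
    · rw [hp, buildWalk_support] at h
      obtain ⟨k, hk, hkeq⟩ := List.mem_map.mp h
      exact ⟨k, by simpa using Nat.lt_succ_iff.mp (List.mem_range.mp hk), hkeq.symm⟩

end ShortCycle

open SimpleGraph Walk in
lemma getVert_eq_support_getElem {G : SimpleGraph V} {u v : V} (p : G.Walk u v)
    (i : ℕ) (hi : i < p.support.length) : p.getVert i = p.support[i] := by
  induction p generalizing i with
  | nil =>
    simp only [Walk.support_nil, List.length_singleton] at hi
    interval_cases i
    simp [Walk.getVert_zero]
  | cons h q ih =>
    cases i with
    | zero => simp [Walk.getVert_zero]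
    | succ i =>
      rw [Walk.getVert_cons_succ]
      have hlen : i < q.support.length := by
        have := hi; rw [Walk.support_cons] at this; simpa using this
      have e : (Walk.cons h q).support[i+1]'hi = q.support[i]'hlen := by
        simp [Walk.support_cons]
      rw [e]
      exact ih i hlen

open SimpleGraph Walk in
lemma cycle_getVert_inj {G : SimpleGraph V} {v : V} {c : G.Walk v v} (hc : c.IsCycle) :
    ∀ a, 1 ≤ a → a ≤ c.length → ∀ b, 1 ≤ b → b ≤ c.length →
      c.getVert a = c.getVert b → a = b := by
  intro a ha1 ha2 b hb1 hb2 hab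
  have hlen : c.support.length = c.length + 1 := c.length_support
  have htail : c.support.tail.Nodup := hc.2
  have htl : c.support.tail.length = c.length := by
    rw [c.support_eq_cons] at hlen
    simpa using hlen
  have hget : ∀ k, 1 ≤ k → (hk : k ≤ c.length) → c.getVert k = c.support.tail[k-1]'(by omega) := by
    intro k hk1 hk2
    rw [getVert_eq_support_getElem c k (by omega)]
    rw [List.getElem_tail]
    congr 1
    omega
  rw [hget a ha1 ha2, hget b hb1 hb2] at hab
  have := (List.Nodup.getElem_inj_iff htail).mp hab
  omega

set_option maxHeartbeats 1000000 in
/-- If an `(Fₙ, K₄)`-free coloring of `K_{6n}` (`n ≥ 4`) contains a red clique `K`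
of order `2n`, then a shortest blue odd cycle among the vertices outside `K`
has length `5` or `7`. -/
theorem shortest_blue_odd_cycle (n : ℕ) (hn : 4 ≤ n)
    (R : SimpleGraph (Fin (6 * n)))
    (hfree : ¬ ContainsFan R n ∧ ¬ ContainsK4 Rᶜ)
    (K : Finset (Fin (6 * n))) (hKcard : K.card = 2 * n) (hKred : R.IsClique ↑K)
    (v : Fin (6 * n)) (c : Rᶜ.Walk v v) (hc : c.IsCycle) (hodd : Odd c.length)
    (havoid : ∀ x ∈ c.support, x ∉ K)
    (hmin : ∀ (w : Fin (6 * n)) (d : Rᶜ.Walk w w), d.IsCycle → Odd d.length →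
      (∀ x ∈ d.support, x ∉ K) → c.length ≤ d.length) :
    c.length = 5 ∨ c.length = 7 := by
  classical
  set t := c.length with ht
  have ht3 : 3 ≤ t := hc.three_le_length
  have ht0 : 0 < t := by omega
  have htodd : t % 2 = 1 := Nat.odd_iff.mp hodd
  -- the cyclically indexed vertices of the cycle
  set vv : ℕ → Fin (6 * n) := fun k => c.getVert (k % t) with hvvdef
  have hvveq : ∀ a b : ℕ, a = b → vv a = vv b := fun a b h => by rw [h]
  have hvv0t : c.getVert 0 = c.getVert t := by
    rw [Walk.getVert_zero, ht, Walk.getVert_length]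
  have hvvinj : ∀ a b : ℕ, vv a = vv b → a % t = b % t := by
    intro a b h
    have ha : a % t < t := Nat.mod_lt _ ht0
    have hb : b % t < t := Nat.mod_lt _ ht0
    have ea : c.getVert (if a % t = 0 then t else a % t) = c.getVert (a % t) := by
      split
      · rw [← hvv0t]; congr 1; omega
      · rfl
    have eb : c.getVert (if b % t = 0 then t else b % t) = c.getVert (b % t) := by
      split
      · rw [← hvv0t]; congr 1; omega
      · rfl
    have := cycle_getVert_inj hc (if a % t = 0 then t else a % t)
      (by split <;> omega) (by rw [← ht]; split <;> omega)
      (if b % t = 0 then t else b % t) (by split <;> omega) (by rw [← ht]; split <;> omega)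
      (by rw [ea, eb]; exact h)
    split_ifs at this <;> omega
  have hvvadj : ∀ k : ℕ, Rᶜ.Adj (vv k) (vv (k + 1)) := by
    intro k
    have hk : k % t < t := Nat.mod_lt _ ht0
    have hadj := c.adj_getVert_succ (i := k % t) (by rw [← ht]; exact hk)
    have hmod : (k + 1) % t = (k % t + 1) % t := (Nat.mod_add_mod k t 1).symm
    by_cases h : k % t + 1 = t
    · have h2 : (k + 1) % t = 0 := by rw [hmod, h, Nat.mod_self]
      show Rᶜ.Adj (c.getVert (k % t)) (c.getVert ((k + 1) % t))
      rw [h2, hvv0t]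
      have e2 : c.getVert t = c.getVert (k % t + 1) := by rw [h]
      rw [e2]
      exact hadj
    · have h2 : (k + 1) % t = k % t + 1 := by rw [hmod]; exact Nat.mod_eq_of_lt (by omega)
      show Rᶜ.Adj (c.getVert (k % t)) (c.getVert ((k + 1) % t))
      rw [h2]
      exact hadj
  have hvvt : ∀ k : ℕ, vv (k + t) = vv k := by
    intro k; show c.getVert ((k + t) % t) = c.getVert (k % t); rw [Nat.add_mod_right]
  have hvvmem : ∀ k, vv k ∈ c.support := by
    intro k
    exact Walk.mem_support_iff_exists_getVert.mpr ⟨k % t, rfl, by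
      rw [← ht]; exact le_of_lt (Nat.mod_lt _ ht0)⟩
  have hvvK : ∀ k, vv k ∉ K := fun k => havoid _ (hvvmem k)
  -- a shorter odd cycle avoiding K contradicts minimality
  have hshort : ∀ (f : ℕ → Fin (6 * n)) (m : ℕ), 2 ≤ m → (m + 1) % 2 = 1 → m + 1 < t →
      (∀ k, k < m → Rᶜ.Adj (f k) (f (k + 1))) → Rᶜ.Adj (f m) (f 0) →
      (∀ a, a ≤ m → ∀ b, b ≤ m → f a = f b → a = b) →
      (∀ k, k ≤ m → f k ∉ K) → False := by
    intro f m hm hmodd hmlt hadj hclose hinj hK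
    obtain ⟨u, d, hcyc, hlen, hsup⟩ := ShortCycle.exists_cycle Rᶜ f m hm hadj hclose hinj
    have := hmin u d hcyc (by rw [Nat.odd_iff, hlen]; exact hmodd)
      (fun x hx => by obtain ⟨k, hk, rfl⟩ := hsup x hx; exact hK k hk)
    rw [hlen] at this
    omega
  -- all chords of the cycle are red
  have hchord : ∀ i dd : ℕ, 2 ≤ dd → dd + 2 ≤ t → R.Adj (vv i) (vv (i + dd)) := by
    intro i dd hdd2 hddt
    by_contra hred
    have hne : vv i ≠ vv (i + dd) := by
      intro h
      have h2 := hvvinj _ _ h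
      have h3 : i ≡ i + dd [MOD t] := h2
      have h4 : t ∣ i + dd - i := (Nat.modEq_iff_dvd' (Nat.le_add_right i dd)).mp h3
      have h5 : t ∣ dd := by simpa using h4
      have := Nat.le_of_dvd (by omega) h5
      omega
    have hblue : Rᶜ.Adj (vv i) (vv (i + dd)) := by
      rw [SimpleGraph.compl_adj]; exact ⟨hne, hred⟩
    have hwindow : ∀ a b : ℕ, a < t → b < t → vv (i + a) = vv (i + b) → a = b := by
      intro a b ha hb h
      have h2 := hvvinj _ _ h
      have h3 : a ≡ b [MOD t] := Nat.ModEq.add_left_cancel' i h2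
      have h4 : a % t = b % t := h3
      rw [Nat.mod_eq_of_lt ha, Nat.mod_eq_of_lt hb] at h4
      exact h4
    rcases Nat.even_or_odd dd with hev | hod
    · refine hshort (fun k => vv (i + k)) dd hdd2 ?_ (by omega)
        (fun k _ => hvvadj (i + k)) ?_ ?_ (fun k _ => hvvK _)
      · rw [Nat.even_iff] at hev; omega
      · exact hblue.symm
      · intro a ha b hb h
        exact hwindow a b (by omega) (by omega) h
    · refine hshort (fun k => vv (i + dd + k)) (t - dd) (by omega) ?_ (by omega)
        (fun k _ => hvvadj (i + dd + k)) ?_ ?_ (fun k _ => hvvK _)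
      · rw [Nat.odd_iff] at hod; omega
      · show Rᶜ.Adj (vv (i + dd + (t - dd))) (vv (i + dd + 0))
        rw [hvveq (i + dd + (t - dd)) (i + t) (by omega), hvvt]
        exact hblue
      · intro a ha b hb h
        have h2 : vv (i + (dd + a)) = vv (i + (dd + b)) := by
          rw [hvveq (i + (dd + a)) (i + dd + a) (by omega),
              hvveq (i + (dd + b)) (i + dd + b) (by omega)]; exact h
        have h3 : (dd + a) % t = (dd + b) % t :=
          Nat.ModEq.add_left_cancel' i (hvvinj _ _ h2)
        rcases eq_or_lt_of_le (show dd + a ≤ t by omega) with hA | hA <;>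
          rcases eq_or_lt_of_le (show dd + b ≤ t by omega) with hB | hB
        · omega
        · have eA : (dd + a) % t = 0 := by rw [hA, Nat.mod_self]
          rw [eA, Nat.mod_eq_of_lt hB] at h3; omega
        · have eB : (dd + b) % t = 0 := by rw [hB, Nat.mod_self]
          rw [eB, Nat.mod_eq_of_lt hA] at h3; omega
        · rw [Nat.mod_eq_of_lt hA, Nat.mod_eq_of_lt hB] at h3; omega
  -- the set W of vertices outside K and outside the cycle
  set W : Finset (Fin (6 * n)) := Finset.univ.filter (fun w => w ∉ K ∧ w ∉ c.support)
    with hWdef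
  have hWmem : ∀ w, w ∈ W ↔ (w ∉ K ∧ w ∉ c.support) := by
    intro w; simp [hWdef]
  set Cs : Finset (Fin (6 * n)) := (Finset.range t).image vv with hCsdef
  have hCsmem : ∀ x, x ∈ c.support ↔ x ∈ Cs := by
    intro x
    constructor
    · intro hx
      obtain ⟨k, hk1, hk2⟩ := Walk.mem_support_iff_exists_getVert.mp hx
      rw [← ht] at hk2
      rcases eq_or_lt_of_le hk2 with hk | hk
      · refine Finset.mem_image.mpr ⟨0, Finset.mem_range.mpr ht0, ?_⟩
        show c.getVert (0 % t) = x
        rw [Nat.zero_mod, hvv0t, ← hk, hk1]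
      · refine Finset.mem_image.mpr ⟨k, Finset.mem_range.mpr hk, ?_⟩
        show c.getVert (k % t) = x
        rw [Nat.mod_eq_of_lt hk, hk1]
    · intro hx
      obtain ⟨k, -, rfl⟩ := Finset.mem_image.mp hx
      exact hvvmem k
  have hCscard : Cs.card = t := by
    rw [hCsdef, Finset.card_image_of_injOn, Finset.card_range]
    intro a ha b hb h
    have := hvvinj _ _ h
    rw [Nat.mod_eq_of_lt (Finset.mem_range.mp ha), Nat.mod_eq_of_lt (Finset.mem_range.mp hb)]
      at this
    exact this
  have hWcard : W.card + 2 * n + t = 6 * n := by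
    have hWeq : W = Finset.univ \ (K ∪ Cs) := by
      ext x
      simp only [hWmem, Finset.mem_sdiff, Finset.mem_univ, Finset.mem_union, true_and,
        not_or, hCsmem]
    have hdisj : Disjoint K Cs := by
      rw [Finset.disjoint_right]
      intro x hx
      obtain ⟨k, -, rfl⟩ := Finset.mem_image.mp hx
      exact hvvK k
    rw [hWeq, Finset.card_sdiff_of_subset (Finset.subset_univ _),
      Finset.card_union_of_disjoint hdisj, hKcard, hCscard]
    have hle : K.card + Cs.card ≤ (Finset.univ : Finset (Fin (6 * n))).card := by
      rw [← Finset.card_union_of_disjoint hdisj]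
      exact Finset.card_le_card (Finset.subset_univ _)
    have huniv : (Finset.univ : Finset (Fin (6 * n))).card = 6 * n := by simp
    rw [hKcard, hCscard, huniv] at hle
    simp only [Finset.card_univ, Fintype.card_fin]
    omega
  -- main case analysis
  by_contra hcon
  push_neg at hcon
  obtain ⟨h5, h7⟩ := hcon
  have hcase : t = 3 ∨ 9 ≤ t := by omega
  rcases hcase with h3 | ht9
  · -- a blue triangle outside K is impossible
    have b01 := hvvadj 0
    have b12 := hvvadj 1
    have b20 : Rᶜ.Adj (vv 2) (vv 0) := by
      have h2 := hvvadj 2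
      have e : vv (2 + 1) = vv 0 := by
        rw [hvveq (2 + 1) (0 + t) (by omega), hvvt]
      rwa [e] at h2
    exact no_blue_triangle hn hfree.1 hfree.2 hKcard hKred (vv 0) (vv 1) (vv 2)
      (hvvK 0) (hvvK 1) (hvvK 2) b01 b20.symm b12
  · -- t ≥ 9 : derive a contradiction by double counting
    obtain ⟨s, hts⟩ : ∃ s, t = 2 * s + 3 := ⟨(t - 3) / 2, by omega⟩
    have hs3 : 3 ≤ s := by omega
    -- a red matching of chords of any size ≤ s around any cycle vertex
    have hCmatch : ∀ (i m' : ℕ), m' ≤ s → ∃ g : Fin m' × Bool → Fin (6 * n),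
        IsRedMatching R (vv i) m' g ∧ ∀ x, (g x) ∈ c.support := by
      intro i m' hm'
      refine ⟨fun x => vv (i + (2 + (x.1 : ℕ) + (if x.2 = true then s else 0))),
        ⟨?_, ?_, ?_⟩, fun x => hvvmem _⟩
      · rintro ⟨a, b⟩ ⟨a', b'⟩ h
        have ha := a.isLt; have ha' := a'.isLt
        set o1 := 2 + (a : ℕ) + (if b = true then s else 0) with ho1
        set o2 := 2 + (a' : ℕ) + (if b' = true then s else 0) with ho2
        have hb1 : o1 < t := by rw [ho1]; split <;> omega
        have hb2 : o2 < t := by rw [ho2]; split <;> omega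
        have h4 : o1 % t = o2 % t := Nat.ModEq.add_left_cancel' i (hvvinj _ _ h)
        rw [Nat.mod_eq_of_lt hb1, Nat.mod_eq_of_lt hb2] at h4
        rw [ho1, ho2] at h4
        have hbb : b = b' := by
          cases b <;> cases b' <;> simp at h4 ⊢ <;> omega
        subst hbb
        simp only [Prod.ext_iff, Fin.ext_iff]
        exact ⟨by omega, trivial⟩
      · rintro ⟨a, b⟩
        have ha := a.isLt
        exact hchord i (2 + (a : ℕ) + (if b = true then s else 0)) (by omega)
          (by split <;> omega)
      · intro j
        have hj := j.isLt
        have h1 := hchord (i + (2 + (j : ℕ))) s (by omega) (by omega)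
        have e1 : vv (i + (2 + (j : ℕ) + (if (false : Bool) = true then s else 0)))
            = vv (i + (2 + (j : ℕ))) := hvveq _ _ (by simp)
        have e2 : vv (i + (2 + (j : ℕ) + (if (true : Bool) = true then s else 0)))
            = vv (i + (2 + (j : ℕ)) + s) := hvveq _ _ (by simp; omega)
        show R.Adj (vv (i + (2 + (j : ℕ) + if (false : Bool) = true then s else 0)))
          (vv (i + (2 + (j : ℕ) + if (true : Bool) = true then s else 0)))
        rw [e1, e2]
        exact h1
    -- s < n, else a fan arises from chords alone
    have hsn : s < n := by
      by_contra hge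
      push_neg at hge
      obtain ⟨g, hg, -⟩ := hCmatch 0 n hge
      exact hfree.1 (containsFan_of_matching hg)
    -- column bound: each cycle vertex has few red neighbours in W
    have hcol : ∀ i : ℕ, (W.filter (fun w => R.Adj (vv i) w)).card ≤ 2 * (n - s) + 2 := by
      intro i
      by_contra hbig
      push_neg at hbig
      rcases matching_or_triangle R (n - s) (W.filter (fun w => R.Adj (vv i) w)) (by omega)
        with ⟨g, hginj, hgmem, hgpair⟩ | ⟨x, y, z, hx, hy, hz, hxy, hxz, hyz⟩
      · obtain ⟨gc, hgc, hgcsup⟩ := hCmatch i s le_rfl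
        have hgD : IsRedMatching R (vv i) (n - s) g :=
          ⟨hginj, fun x => (Finset.mem_filter.mp (hgmem x)).2, hgpair⟩
        obtain ⟨g', hg', -⟩ := isRedMatching_combine (m := n) hgc hgD (fun x y h => by
          have h1 := hgcsup x
          have h2 := (hWmem _).mp (Finset.mem_filter.mp (hgmem y)).1
          exact h2.2 (h ▸ h1)) (by omega)
        exact hfree.1 (containsFan_of_matching hg')
      · have m1 := (hWmem _).mp (Finset.mem_filter.mp hx).1
        have m2 := (hWmem _).mp (Finset.mem_filter.mp hy).1
        have m3 := (hWmem _).mp (Finset.mem_filter.mp hz).1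
        exact no_blue_triangle hn hfree.1 hfree.2 hKcard hKred x y z
          m1.1 m2.1 m3.1 hxy hxz hyz
    -- row bound: each w in W has at least t-2 red neighbours on the cycle
    have hrow : ∀ w ∈ W, t - 2 ≤ ((Finset.range t).filter (fun i => R.Adj (vv i) w)).card := by
      intro w hw
      obtain ⟨hwK, hwsup⟩ := (hWmem w).mp hw
      have hwne : ∀ k, w ≠ vv k := fun k h => hwsup (h ▸ hvvmem k)
      set B := (Finset.range t).filter (fun i => ¬ R.Adj (vv i) w) with hBdef
      have hBblue : ∀ i ∈ B, Rᶜ.Adj w (vv i) := by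
        intro i hi
        obtain ⟨-, hi2⟩ := Finset.mem_filter.mp hi
        rw [SimpleGraph.compl_adj]
        exact ⟨hwne i, fun h => hi2 h.symm⟩
      have hpair : ∀ a b, a ∈ B → b ∈ B → a < b → b - a = 2 ∨ (b - a) + 2 = t := by
        intro a b ha hb hab
        have ha' := Finset.mem_range.mp (Finset.mem_filter.mp ha).1
        have hb' := Finset.mem_range.mp (Finset.mem_filter.mp hb).1
        by_contra hcon2
        push_neg at hcon2
        obtain ⟨hd2, hdt⟩ := hcon2
        set dd := b - a with hdd
        have hdd1 : 1 ≤ dd := by omega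
        have hddt : dd ≤ t - 1 := by omega
        have blue1 : Rᶜ.Adj w (vv a) := hBblue a ha
        have blue2 : Rᶜ.Adj w (vv (a + dd)) := by
          rw [hvveq (a + dd) b (by omega)]; exact hBblue b hb
        rcases Nat.even_or_odd dd with hev | hod
        · -- even distance, use the complementary arc through w
          rw [Nat.even_iff] at hev
          have hdd4 : 4 ≤ dd := by omega
          refine hshort (fun k => if k = t - dd + 1 then w else vv (a + dd + k))
            (t - dd + 1) (by omega) (by omega) (by omega) ?_ ?_ ?_ ?_
          · intro k hk
            by_cases hk2 : k = t - dd
            · subst hk2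
              simp only [if_neg (show t - dd ≠ t - dd + 1 by omega), if_pos rfl]
              have e : vv (a + dd + (t - dd)) = vv a := by
                rw [hvveq (a + dd + (t - dd)) (a + t) (by omega), hvvt]
              rw [e]
              exact blue1.symm
            · simp only [if_neg (show k ≠ t - dd + 1 by omega),
                if_neg (show k + 1 ≠ t - dd + 1 by omega)]
              exact hvvadj (a + dd + k)
          · simp only [if_pos rfl, if_neg (show (0:ℕ) ≠ t - dd + 1 by omega)]
            exact blue2
          · intro x hx y hy h
            by_cases hx2 : x = t - dd + 1 <;> by_cases hy2 : y = t - dd + 1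
            · omega
            · simp only [if_pos hx2, if_neg hy2] at h
              exact absurd h (hwne _)
            · simp only [if_neg hx2, if_pos hy2] at h
              exact absurd h.symm (hwne _)
            · simp only [if_neg hx2, if_neg hy2] at h
              have h2 : vv (a + (dd + x)) = vv (a + (dd + y)) := by
                rw [hvveq (a + (dd + x)) (a + dd + x) (by omega),
                    hvveq (a + (dd + y)) (a + dd + y) (by omega)]
                exact h
              have h3 : (dd + x) % t = (dd + y) % t :=
                Nat.ModEq.add_left_cancel' a (hvvinj _ _ h2)
              rcases eq_or_lt_of_le (show dd + x ≤ t by omega) with hA | hA <;>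
                rcases eq_or_lt_of_le (show dd + y ≤ t by omega) with hB2 | hB2
              · omega
              · have eA : (dd + x) % t = 0 := by rw [hA, Nat.mod_self]
                rw [eA, Nat.mod_eq_of_lt hB2] at h3; omega
              · have eB : (dd + y) % t = 0 := by rw [hB2, Nat.mod_self]
                rw [eB, Nat.mod_eq_of_lt hA] at h3; omega
              · rw [Nat.mod_eq_of_lt hA, Nat.mod_eq_of_lt hB2] at h3; omega
          · intro k hk
            by_cases hk2 : k = t - dd + 1
            · simp only [if_pos hk2]; exact hwK
            · simp only [if_neg hk2]; exact hvvK _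
        · -- odd distance, short-cut through w
          rw [Nat.odd_iff] at hod
          have hdd3 : dd + 2 < t := by omega
          refine hshort (fun k => if k = dd + 1 then w else vv (a + k))
            (dd + 1) (by omega) (by omega) (by omega) ?_ ?_ ?_ ?_
          · intro k hk
            by_cases hk2 : k = dd
            · subst hk2
              simp only [if_neg (show dd ≠ dd + 1 by omega), if_pos rfl]
              exact blue2.symm
            · simp only [if_neg (show k ≠ dd + 1 by omega),
                if_neg (show k + 1 ≠ dd + 1 by omega)]
              exact hvvadj (a + k)
          · simp only [if_pos rfl, if_neg (show (0:ℕ) ≠ dd + 1 by omega)]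
            exact blue1
          · intro x hx y hy h
            by_cases hx2 : x = dd + 1 <;> by_cases hy2 : y = dd + 1
            · omega
            · simp only [if_pos hx2, if_neg hy2] at h
              exact absurd h (hwne _)
            · simp only [if_neg hx2, if_pos hy2] at h
              exact absurd h.symm (hwne _)
            · simp only [if_neg hx2, if_neg hy2] at h
              have h3 : x % t = y % t := Nat.ModEq.add_left_cancel' a (hvvinj _ _ h)
              rw [Nat.mod_eq_of_lt (by omega), Nat.mod_eq_of_lt (by omega)] at h3
              exact h3
          · intro k hk
            by_cases hk2 : k = dd + 1
            · simp only [if_pos hk2]; exact hwK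
            · simp only [if_neg hk2]; exact hvvK _
      have hB2 : B.card ≤ 2 := by
        by_contra hc3
        push_neg at hc3
        obtain ⟨x, hx, y, hy, z, hz, hxy, hxz, hyz⟩ := Finset.two_lt_card.mp hc3
        have hsorted : ∀ p q r, p ∈ B → q ∈ B → r ∈ B → p < q → q < r → False := by
          intro p q r hp hq hr hpq hqr
          have h1 := hpair p q hp hq hpq
          have h2 := hpair q r hq hr hqr
          have h3 := hpair p r hp hr (lt_trans hpq hqr)
          have hr' := Finset.mem_range.mp (Finset.mem_filter.mp hr).1
          omega
        rcases lt_trichotomy x y with h1 | h1 | h1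
        · rcases lt_trichotomy y z with h2 | h2 | h2
          · exact hsorted x y z hx hy hz h1 h2
          · exact hyz h2
          · rcases lt_trichotomy x z with h4 | h4 | h4
            · exact hsorted x z y hx hz hy h4 h2
            · exact hxz h4
            · exact hsorted z x y hz hx hy h4 h1
        · exact hxy h1
        · rcases lt_trichotomy y z with h2 | h2 | h2
          · rcases lt_trichotomy x z with h4 | h4 | h4
            · exact hsorted y x z hy hx hz h1 h4
            · exact hxz h4
            · exact hsorted y z x hy hz hx h2 h4
          · exact hyz h2
          · exact hsorted z y x hz hy hx h2 h1
      have hsplit := Finset.card_filter_add_card_filter_not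
        (s := Finset.range t) (p := fun i => R.Adj (vv i) w)
      rw [Finset.card_range] at hsplit
      rw [← hBdef] at hsplit
      omega
    -- double counting the red edges between the cycle and W
    have hdouble : ∑ w ∈ W, ((Finset.range t).filter (fun i => R.Adj (vv i) w)).card
        = ∑ i ∈ Finset.range t, (W.filter (fun w => R.Adj (vv i) w)).card := by
      simp_rw [Finset.card_filter]
      rw [Finset.sum_comm]
    have hlow : W.card * (t - 2) ≤
        ∑ w ∈ W, ((Finset.range t).filter (fun i => R.Adj (vv i) w)).card := by
      have := Finset.card_nsmul_le_sum W
        (fun w => ((Finset.range t).filter (fun i => R.Adj (vv i) w)).card) (t - 2) hrow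
      simpa [smul_eq_mul] using this
    have hup : ∑ i ∈ Finset.range t, (W.filter (fun w => R.Adj (vv i) w)).card
        ≤ t * (2 * (n - s) + 2) := by
      calc ∑ i ∈ Finset.range t, (W.filter (fun w => R.Adj (vv i) w)).card
          ≤ ∑ _i ∈ Finset.range t, (2 * (n - s) + 2) :=
            Finset.sum_le_sum (fun i _ => hcol i)
        _ = t * (2 * (n - s) + 2) := by
            rw [Finset.sum_const, Finset.card_range, smul_eq_mul]
    obtain ⟨r, hrn⟩ : ∃ r, n = r + s := ⟨n - s, by omega⟩
    have hr1 : 1 ≤ r := by omega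
    have hfin : W.card * (2 * s + 1) ≤ (2 * s + 3) * (2 * r + 2) := by
      have e1 : t - 2 = 2 * s + 1 := by omega
      have e2 : n - s = r := by omega
      calc W.card * (2 * s + 1) = W.card * (t - 2) := by rw [e1]
        _ ≤ _ := hlow
        _ = _ := hdouble
        _ ≤ t * (2 * (n - s) + 2) := hup
        _ = (2 * s + 3) * (2 * r + 2) := by rw [hts, e2]
    have hWc : W.card + 3 = 4 * r + 2 * s := by omega
    have hz1 : (W.card : ℤ) * (2 * s + 1) ≤ (2 * s + 3) * (2 * r + 2) := by exact_mod_cast hfin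
    have hz2 : (W.card : ℤ) + 3 = 4 * r + 2 * s := by exact_mod_cast hWc
    have hz3 : (3 : ℤ) ≤ s := by exact_mod_cast hs3
    have hz4 : (1 : ℤ) ≤ r := by exact_mod_cast hr1
    have hzW : (W.card : ℤ) = 4 * r + 2 * s - 3 := by linarith
    rw [hzW] at hz1
    nlinarith [hz1, hz3, hz4]
end

section
/- Let n ≥ 4 be an integer, let K_{6n} be given a red/blue edge-coloring that is (F_n, K_4)-free, and suppose there is a set K of 2n vertices all of whose internal edges are red. Then the coloring restricted to the 4n vertices outside K contains no blue cycle of length 5. -/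
open SimpleGraph

lemma containsFan_build {V : Type*} (G : SimpleGraph V) (n : ℕ) (w : V)
    (q : Fin n × Bool → V)
    (hinj : Function.Injective q) (hw : ∀ x, w ≠ q x)
    (hadjw : ∀ x, G.Adj w (q x))
    (hadjp : ∀ i, G.Adj (q (i, false)) (q (i, true))) :
    ContainsFan G n := by
  refine ⟨⟨fun o => o.elim w q, ?_⟩, ?_⟩
  · rintro (_ | x) (_ | y) h
    · rfl
    · exact absurd h (hw y)
    · exact absurd h.symm (hw x)
    · exact congrArg some (hinj h)
  · rintro (_ | ⟨i, a⟩) (_ | ⟨j, b⟩) ⟨hne, hor⟩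
    · simp at hne
    · exact hadjw (j, b)
    · exact (hadjw (i, a)).symm
    · rcases hor with h | h | ⟨k, a', b', h1, h2⟩
      · simp at h
      · simp at h
      · obtain ⟨e1, e2⟩ : i = k ∧ a = a' := by simpa using h1
        obtain ⟨e3, e4⟩ : j = k ∧ b = b' := by simpa using h2
        have hij : j = i := by rw [e3, ← e1]
        have hab : a ≠ b := fun h => hne (by rw [h, hij])
        subst hij
        cases a <;> cases b
        · exact absurd rfl hab
        · exact hadjp j
        · exact (hadjp j).symm
        · exact absurd rfl hab

lemma exists_red_matching {V : Type*} [DecidableEq V] (G : SimpleGraph V) :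
    ∀ (k m : ℕ) (S : Finset V),
      (∀ T ⊆ S, m + 2 ≤ T.card → ∃ a ∈ T, ∃ b ∈ T, G.Adj a b) →
      2 * k + m ≤ S.card →
      ∃ q : Fin k × Bool → V, Function.Injective q ∧ (∀ x, q x ∈ S) ∧
        ∀ i, G.Adj (q (i, false)) (q (i, true)) := by
  intro k
  induction k with
  | zero =>
    intro m S _ _
    exact ⟨fun x => x.1.elim0, fun x => x.1.elim0, fun x => x.1.elim0, fun i => i.elim0⟩
  | succ k ih =>
    intro m S hS hcard
    obtain ⟨a, ha, b, hb, hab⟩ := hS S subset_rfl (by omega)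
    have hne : a ≠ b := hab.ne
    set S' := (S.erase a).erase b with hS'
    have hsub : S' ⊆ S := (Finset.erase_subset _ _).trans (Finset.erase_subset _ _)
    have hbmem : b ∈ S.erase a := Finset.mem_erase.2 ⟨hne.symm, hb⟩
    have hcard' : 2 * k + m ≤ S'.card := by
      have h1 : (S.erase a).card = S.card - 1 := Finset.card_erase_of_mem ha
      have h2 : S'.card = (S.erase a).card - 1 := Finset.card_erase_of_mem hbmem
      omega
    obtain ⟨q', hq'inj, hq'mem, hq'adj⟩ :=
      ih m S' (fun T hT h => hS T (hT.trans hsub) h) hcard'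
    have hq'a : ∀ x, q' x ≠ a := by
      intro x hx
      have := hq'mem x
      rw [hx] at this
      exact (Finset.mem_erase.1 ((Finset.mem_erase.1 this).2)).1 rfl
    have hq'b : ∀ x, q' x ≠ b := by
      intro x hx
      have := hq'mem x
      rw [hx] at this
      exact (Finset.mem_erase.1 this).1 rfl
    refine ⟨fun x => Fin.cases (cond x.2 b a) (fun j => q' (j, x.2)) x.1, ?_, ?_, ?_⟩
    · rintro ⟨i, cc⟩ ⟨i', cc'⟩ h
      rcases Fin.eq_zero_or_eq_succ i with rfl | ⟨j, rfl⟩ <;>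
        rcases Fin.eq_zero_or_eq_succ i' with rfl | ⟨j', rfl⟩ <;>
          simp only [Fin.cases_zero, Fin.cases_succ] at h
      · cases cc <;> cases cc' <;> simp_all
      · cases cc <;> simp at h <;>
          [exact absurd (hq'a _ h.symm) not_false;
           exact absurd (hq'b _ h.symm) not_false]
      · cases cc' <;> simp at h <;>
          [exact absurd (hq'a _ h) not_false;
           exact absurd (hq'b _ h) not_false]
      · obtain ⟨rfl, rfl⟩ := Prod.mk.injEq .. ▸ hq'inj h
        rfl
    · rintro ⟨i, cc⟩
      rcases Fin.eq_zero_or_eq_succ i with rfl | ⟨j, rfl⟩ <;>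
        simp only [Fin.cases_zero, Fin.cases_succ]
      · cases cc
        · exact ha
        · exact hb
      · exact hsub (hq'mem _)
    · intro i
      rcases Fin.eq_zero_or_eq_succ i with rfl | ⟨j, rfl⟩ <;>
        simp only [Fin.cases_zero, Fin.cases_succ]
      · exact hab
      · exact hq'adj j

lemma no_two_red_to_K (n : ℕ) (hn : 4 ≤ n) (R : SimpleGraph (Fin (6 * n)))
    (hfan : ¬ ContainsFan R n)
    (K : Finset (Fin (6 * n))) (hKcard : K.card = 2 * n) (hKred : R.IsClique ↑K)
    {x w u : Fin (6 * n)} (hx : x ∉ K) (hw : w ∈ K) (hu : u ∈ K)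
    (hwu : w ≠ u) (h1 : R.Adj x w) (h2 : R.Adj x u) : False := by
  classical
  obtain ⟨m, rfl⟩ : ∃ m, n = m + 1 := ⟨n - 1, by omega⟩
  set S := (K.erase w).erase u with hSdef
  have hSsub : S ⊆ K := (Finset.erase_subset _ _).trans (Finset.erase_subset _ _)
  have humem : u ∈ K.erase w := Finset.mem_erase.2 ⟨hwu.symm, hu⟩
  have hScard : 2 * m + 0 ≤ S.card := by
    have e1 : (K.erase w).card = K.card - 1 := Finset.card_erase_of_mem hw
    have e2 : S.card = (K.erase w).card - 1 := Finset.card_erase_of_mem humem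
    omega
  have hedge : ∀ T ⊆ S, 0 + 2 ≤ T.card → ∃ a ∈ T, ∃ b ∈ T, R.Adj a b := by
    intro T hT hc
    obtain ⟨a, ha, b, hb, hab⟩ := (Finset.one_lt_card (s := T)).mp (by omega)
    exact ⟨a, ha, b, hb, hKred (hSsub (hT ha)) (hSsub (hT hb)) hab⟩
  obtain ⟨q', hinj, hmem, hadj⟩ := exists_red_matching R m 0 S hedge hScard
  have hmemS : ∀ y, q' y ≠ u ∧ q' y ≠ w ∧ q' y ∈ K := by
    intro y
    have h := hmem y
    rw [hSdef, Finset.mem_erase, Finset.mem_erase] at h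
    exact ⟨h.1, h.2.1, h.2.2⟩
  have hxu : x ≠ u := h2.ne
  refine hfan (containsFan_build R (m + 1) w
    (fun p => Fin.cases (cond p.2 u x) (fun j => q' (j, p.2)) p.1) ?_ ?_ ?_ ?_)
  · rintro ⟨i, cc⟩ ⟨i', cc'⟩ h
    rcases Fin.eq_zero_or_eq_succ i with rfl | ⟨j, rfl⟩ <;>
      rcases Fin.eq_zero_or_eq_succ i' with rfl | ⟨j', rfl⟩ <;>
        simp only [Fin.cases_zero, Fin.cases_succ] at h
    · cases cc <;> cases cc' <;> simp_all
    · cases cc <;> simp only [cond] at h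
      · exact absurd (h ▸ (hmemS (j', cc')).2.2) hx
      · exact absurd h.symm ((hmemS (j', cc')).1)
    · cases cc' <;> simp only [cond] at h
      · exact absurd (h ▸ hx) (by simp [(hmemS (j, cc)).2.2])
      · exact absurd h ((hmemS (j, cc)).1)
    · have := hinj h
      obtain ⟨e1, e2⟩ := Prod.mk.injEq .. ▸ this
      simp [Prod.ext_iff]
      exact ⟨e1, e2⟩
  · rintro ⟨i, cc⟩
    rcases Fin.eq_zero_or_eq_succ i with rfl | ⟨j, rfl⟩ <;>
      simp only [Fin.cases_zero, Fin.cases_succ]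
    · cases cc <;> simp only [cond]
      · exact h1.ne'
      · exact hwu
    · exact fun hh => (hmemS (j, cc)).2.1 hh.symm
  · rintro ⟨i, cc⟩
    rcases Fin.eq_zero_or_eq_succ i with rfl | ⟨j, rfl⟩ <;>
      simp only [Fin.cases_zero, Fin.cases_succ]
    · cases cc <;> simp only [cond]
      · exact h1.symm
      · exact hKred hw hu hwu
    · exact hKred hw ((hmemS (j, cc)).2.2) (fun hh => (hmemS (j, cc)).2.1 hh.symm)
  · intro i
    rcases Fin.eq_zero_or_eq_succ i with rfl | ⟨j, rfl⟩ <;>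
      simp only [Fin.cases_zero, Fin.cases_succ]
    · exact h2
    · exact hadj j

lemma no_blue_triangle_outside_s6 (n : ℕ) (hn : 4 ≤ n) (R : SimpleGraph (Fin (6 * n)))
    (hfan : ¬ ContainsFan R n) (hK4 : ¬ ContainsK4 Rᶜ)
    (K : Finset (Fin (6 * n))) (hKcard : K.card = 2 * n) (hKred : R.IsClique ↑K)
    {x y z : Fin (6 * n)} (hx : x ∉ K) (hy : y ∉ K) (hz : z ∉ K)
    (hxy : Rᶜ.Adj x y) (hyz : Rᶜ.Adj y z) (hxz : Rᶜ.Adj x z) : False := by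
  classical
  have hone : ∀ a, a ∉ K → (K.filter (fun w => R.Adj a w)).card ≤ 1 := by
    intro a ha
    rw [Finset.card_le_one]
    intro w hw u hu
    by_contra hne
    rw [Finset.mem_filter] at hw hu
    exact no_two_red_to_K n hn R hfan K hKcard hKred ha hw.1 hu.1 hne hw.2 hu.2
  set Bad := (K.filter (fun w => R.Adj x w)) ∪ (K.filter (fun w => R.Adj y w)) ∪
    (K.filter (fun w => R.Adj z w)) with hBad
  have hBadsub : Bad ⊆ K := by
    rw [hBad]
    refine Finset.union_subset (Finset.union_subset ?_ ?_) ?_ <;> exact Finset.filter_subset _ _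
  have hBadcard : Bad.card ≤ 3 := by
    calc Bad.card ≤ _ + _ := Finset.card_union_le _ _
    _ ≤ ((K.filter (fun w => R.Adj x w)).card + (K.filter (fun w => R.Adj y w)).card) +
        (K.filter (fun w => R.Adj z w)).card := by
        gcongr
        exact Finset.card_union_le _ _
    _ ≤ 1 + 1 + 1 := by
        gcongr <;> [exact hone x hx; exact hone y hy; exact hone z hz]
    _ = 3 := rfl
  have hKBad : 0 < (K \ Bad).card := by
    rw [Finset.card_sdiff_of_subset hBadsub]
    omega
  obtain ⟨w, hwmem⟩ := Finset.card_pos.mp hKBad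
  rw [Finset.mem_sdiff] at hwmem
  obtain ⟨hwK, hwBad⟩ := hwmem
  simp only [hBad, Finset.mem_union, Finset.mem_filter, not_or, not_and] at hwBad
  have hbx : Rᶜ.Adj x w := ⟨fun h => hx (h ▸ hwK), hwBad.1.1 hwK⟩
  have hby : Rᶜ.Adj y w := ⟨fun h => hy (h ▸ hwK), hwBad.1.2 hwK⟩
  have hbz : Rᶜ.Adj z w := ⟨fun h => hz (h ▸ hwK), hwBad.2 hwK⟩
  exact hK4 ⟨x, y, z, w, hxy, hxz, hbx, hyz, hby, hbz⟩

lemma red_outdeg_le (n : ℕ) (hn : 4 ≤ n) (R : SimpleGraph (Fin (6 * n)))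
    (hfan : ¬ ContainsFan R n) (hK4 : ¬ ContainsK4 Rᶜ)
    (K : Finset (Fin (6 * n))) (hKcard : K.card = 2 * n) (hKred : R.IsClique ↑K)
    (v : Fin (6 * n))
    (S : Finset (Fin (6 * n))) (hSK : ∀ z ∈ S, z ∉ K) (hSadj : ∀ z ∈ S, R.Adj v z) :
    S.card ≤ 2 * n := by
  classical
  by_contra hlarge
  have hedge : ∀ T ⊆ S, 1 + 2 ≤ T.card → ∃ a ∈ T, ∃ b ∈ T, R.Adj a b := by
    intro T hT hc
    obtain ⟨a, b, c, ha, hb, hc', hab, hac, hbc⟩ :=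
      (Finset.two_lt_card_iff (s := T)).mp (by omega)
    by_contra hno
    push_neg at hno
    exact no_blue_triangle_outside_s6 n hn R hfan hK4 K hKcard hKred
      (hSK a (hT ha)) (hSK b (hT hb)) (hSK c (hT hc'))
      ⟨hab, hno a ha b hb⟩ ⟨hbc, hno b hb c hc'⟩ ⟨hac, hno a ha c hc'⟩
  obtain ⟨q, hinj, hmem, hadj⟩ := exists_red_matching R n 1 S hedge (by omega)
  exact hfan (containsFan_build R n v q hinj
    (fun p => (hSadj _ (hmem p)).ne)
    (fun p => hSadj _ (hmem p))
    hadj)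

set_option maxHeartbeats 1600000 in
/-- If an `(Fₙ, K₄)`-free coloring of `K_{6n}` (`n ≥ 4`) contains a red clique `K`
of order `2n`, then there is no blue cycle of length `5` among the vertices
outside `K`. -/
theorem no_blue_C5_outside (n : ℕ) (hn : 4 ≤ n)
    (R : SimpleGraph (Fin (6 * n)))
    (hfree : ¬ ContainsFan R n ∧ ¬ ContainsK4 Rᶜ)
    (K : Finset (Fin (6 * n))) (hKcard : K.card = 2 * n) (hKred : R.IsClique ↑K) :
    ∀ (v : Fin (6 * n)) (c : Rᶜ.Walk v v), c.IsCycle →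
      (∀ x ∈ c.support, x ∉ K) → c.length ≠ 5 := by
  classical
  obtain ⟨hfan, hK4⟩ := hfree
  intro v c hcyc hsupp hlen
  cases c with
  | nil => simp at hlen
  | cons h1 p1 =>
  rename_i v2
  cases p1 with
  | nil => simp at hlen
  | cons h2 p2 =>
  rename_i v3
  cases p2 with
  | nil => simp at hlen
  | cons h3 p3 =>
  rename_i v4
  cases p3 with
  | nil => simp at hlen
  | cons h4 p4 =>
  rename_i v5
  cases p4 with
  | nil => simp at hlen
  | cons h5 p5 =>
  cases p5 with
  | cons h6 p6 => simp [SimpleGraph.Walk.length_cons] at hlen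
  | nil =>
  clear hlen
  have hnd := hcyc.2
  simp only [SimpleGraph.Walk.support_cons, SimpleGraph.Walk.support_nil, List.tail_cons,
    List.nodup_cons, List.mem_cons, List.mem_singleton, List.not_mem_nil, or_false,
    not_or, List.nodup_nil, and_true] at hnd
  obtain ⟨⟨h23, h24, h25, h2v⟩, ⟨h34, h35, h3v⟩, ⟨h45, h4v⟩, h5v, -⟩ := hnd
  have hvK : v ∉ K := hsupp v (by simp)
  have h2K : v2 ∉ K := hsupp v2 (by simp)
  have h3K : v3 ∉ K := hsupp v3 (by simp)
  have h4K : v4 ∉ K := hsupp v4 (by simp)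
  have h5K : v5 ∉ K := hsupp v5 (by simp)
  set P : Fin 5 → Fin (6 * n) := ![v, v2, v3, v4, v5] with hP
  have hPne : ∀ i j : Fin 5, i ≠ j → P i ≠ P j := by
    have e1 : v ≠ v2 := Ne.symm h2v
    have e2 : v ≠ v3 := Ne.symm h3v
    have e3 : v ≠ v4 := Ne.symm h4v
    have e4 : v ≠ v5 := Ne.symm h5v
    have e5 : v3 ≠ v2 := Ne.symm h23
    have e6 : v4 ≠ v2 := Ne.symm h24
    have e7 : v5 ≠ v2 := Ne.symm h25
    have e8 : v4 ≠ v3 := Ne.symm h34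
    have e9 : v5 ≠ v3 := Ne.symm h35
    have e10 : v5 ≠ v4 := Ne.symm h45
    intro i j hij
    fin_cases i <;> fin_cases j <;> simp_all [P]
  have hPinj : Function.Injective P := by
    intro i j h
    by_contra hne
    exact hPne i j hne h
  have hPnotK : ∀ i : Fin 5, P i ∉ K := by
    intro i
    fin_cases i <;> simp_all [P]
  have hblue : ∀ i j : Fin 5, (j = i + 1 ∨ i = j + 1) → Rᶜ.Adj (P i) (P j) := by
    have b1 := h1.symm
    have b2 := h2.symm
    have b3 := h3.symm
    have b4 := h4.symm
    have b5 := h5.symm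
    intro i j hij
    fin_cases i <;> fin_cases j <;> simp_all [P]
  have hfind : ∀ i j : Fin 5, i ≠ j → ¬(j = i + 1 ∨ i = j + 1) →
      ∃ k : Fin 5, (k = i + 1 ∨ i = k + 1) ∧ (j = k + 1 ∨ k = j + 1) := by decide
  have htriple : ∀ i j k : Fin 5, i ≠ j → i ≠ k → j ≠ k →
      (j = i + 1 ∨ i = j + 1) ∨ (k = i + 1 ∨ i = k + 1) ∨ (k = j + 1 ∨ j = k + 1) := by decide
  have hnbhd : ∀ i : Fin 5,
      (Finset.univ.filter (fun j : Fin 5 => j = i + 1 ∨ i = j + 1)).card ≤ 2 := by decide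
  have hchord : ∀ i j : Fin 5, i ≠ j → ¬(j = i + 1 ∨ i = j + 1) → R.Adj (P i) (P j) := by
    intro i j hij hnc
    by_contra hnr
    have hb : Rᶜ.Adj (P i) (P j) := ⟨hPne i j hij, hnr⟩
    obtain ⟨k, hk1, hk2⟩ := hfind i j hij hnc
    exact no_blue_triangle_outside_s6 n hn R hfan hK4 K hKcard hKred (hPnotK i) (hPnotK k)
      (hPnotK j) (hblue i k hk1) (hblue k j hk2) hb
  set O : Finset (Fin (6 * n)) := Finset.univ \ K with hO
  have hOcard : O.card = 4 * n := by
    rw [hO, Finset.card_sdiff_of_subset (Finset.subset_univ K), Finset.card_univ, Fintype.card_fin, hKcard]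
    omega
  set Cyc : Finset (Fin (6 * n)) := Finset.image P Finset.univ with hCyc
  have hCyccard : Cyc.card = 5 := by
    rw [hCyc, Finset.card_image_of_injective _ hPinj]
    simp
  have hCycO : Cyc ⊆ O := by
    intro z hz
    obtain ⟨i, -, rfl⟩ := Finset.mem_image.1 hz
    rw [hO, Finset.mem_sdiff]
    exact ⟨Finset.mem_univ _, hPnotK i⟩
  set W : Finset (Fin (6 * n)) := O \ Cyc with hW
  have hWcard : W.card = 4 * n - 5 := by
    rw [hW, Finset.card_sdiff_of_subset hCycO, hOcard, hCyccard]
  have hlow : ∀ i : Fin 5, 2 * n - 3 ≤ (W.filter (fun z => Rᶜ.Adj (P i) z)).card := by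
    intro i
    have hred : (O.filter (fun z => R.Adj (P i) z)).card ≤ 2 * n := by
      refine red_outdeg_le n hn R hfan hK4 K hKcard hKred (P i) _ ?_ ?_
      · intro z hz
        rw [Finset.mem_filter, hO, Finset.mem_sdiff] at hz
        exact hz.1.2
      · intro z hz
        exact (Finset.mem_filter.1 hz).2
    have hcover : O ⊆ (O.filter (fun z => R.Adj (P i) z)) ∪
        (O.filter (fun z => Rᶜ.Adj (P i) z)) ∪ {P i} := by
      intro z hz
      by_cases hzi : z = P i
      · simp [hzi]
      · by_cases hr : R.Adj (P i) z
        · simp only [Finset.mem_union, Finset.mem_filter]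
          exact Or.inl (Or.inl ⟨hz, hr⟩)
        · simp only [Finset.mem_union, Finset.mem_filter]
          exact Or.inl (Or.inr ⟨hz, ⟨fun h => hzi h.symm, hr⟩⟩)
    have hOB : 2 * n - 1 ≤ (O.filter (fun z => Rᶜ.Adj (P i) z)).card := by
      have hc1 := Finset.card_le_card hcover
      have hc2 := Finset.card_union_le ((O.filter (fun z => R.Adj (P i) z)) ∪
        (O.filter (fun z => Rᶜ.Adj (P i) z))) ({P i} : Finset (Fin (6 * n)))
      have hc3 := Finset.card_union_le (O.filter (fun z => R.Adj (P i) z))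
        (O.filter (fun z => Rᶜ.Adj (P i) z))
      have hc4 : ({P i} : Finset (Fin (6 * n))).card = 1 := Finset.card_singleton _
      omega
    have hsplit : W.filter (fun z => Rᶜ.Adj (P i) z) =
        (O.filter (fun z => Rᶜ.Adj (P i) z)) \ Cyc := by
      rw [hW]
      ext z
      simp only [Finset.mem_filter, Finset.mem_sdiff]
      exact and_right_comm
    have hBC : (O.filter (fun z => Rᶜ.Adj (P i) z)) ∩ Cyc ⊆
        Finset.image P (Finset.univ.filter (fun j : Fin 5 => j = i + 1 ∨ i = j + 1)) := by
      intro z hz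
      rw [Finset.mem_inter] at hz
      obtain ⟨hzB, hzC⟩ := hz
      obtain ⟨j, -, rfl⟩ := Finset.mem_image.1 hzC
      have hadjz : Rᶜ.Adj (P i) (P j) := (Finset.mem_filter.1 hzB).2
      have hij : i ≠ j := fun h => hadjz.ne (congrArg P h)
      by_cases hc : j = i + 1 ∨ i = j + 1
      · exact Finset.mem_image.2 ⟨j, Finset.mem_filter.2 ⟨Finset.mem_univ _, hc⟩, rfl⟩
      · exact absurd (hchord i j hij hc) hadjz.2
    have hBCcard : ((O.filter (fun z => Rᶜ.Adj (P i) z)) ∩ Cyc).card ≤ 2 :=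
      le_trans (Finset.card_le_card hBC) (le_trans Finset.card_image_le (hnbhd i))
    have hsd : ((O.filter (fun z => Rᶜ.Adj (P i) z)) \ Cyc).card =
        (O.filter (fun z => Rᶜ.Adj (P i) z)).card -
          ((O.filter (fun z => Rᶜ.Adj (P i) z)) ∩ Cyc).card := by
      rw [← Finset.sdiff_inter_self_left, Finset.card_sdiff_of_subset Finset.inter_subset_left]
    rw [hsplit, hsd]
    omega
  have hup : ∀ z ∈ W, (Finset.univ.filter (fun i : Fin 5 => Rᶜ.Adj (P i) z)).card ≤ 2 := by
    intro z hzW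
    by_contra hbig
    obtain ⟨i, j, k, hi, hj, hk, hij, hik, hjk⟩ :=
      (Finset.two_lt_card_iff (s := Finset.univ.filter (fun i : Fin 5 => Rᶜ.Adj (P i) z))).mp
        (by omega)
    rw [Finset.mem_filter] at hi hj hk
    have hzK : z ∉ K := by
      rw [hW, Finset.mem_sdiff, hO, Finset.mem_sdiff] at hzW
      exact hzW.1.2
    rcases htriple i j k hij hik hjk with hc | hc | hc
    · exact no_blue_triangle_outside_s6 n hn R hfan hK4 K hKcard hKred (hPnotK i) (hPnotK j) hzK
        (hblue i j hc) hj.2 hi.2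
    · exact no_blue_triangle_outside_s6 n hn R hfan hK4 K hKcard hKred (hPnotK i) (hPnotK k) hzK
        (hblue i k hc) hk.2 hi.2
    · exact no_blue_triangle_outside_s6 n hn R hfan hK4 K hKcard hKred (hPnotK j) (hPnotK k) hzK
        (hblue j k hc) hk.2 hj.2
  have hdouble : ∑ i : Fin 5, (W.filter (fun z => Rᶜ.Adj (P i) z)).card =
      ∑ z ∈ W, (Finset.univ.filter (fun i : Fin 5 => Rᶜ.Adj (P i) z)).card := by
    simp_rw [Finset.card_filter]
    exact Finset.sum_comm
  have hlower : 5 * (2 * n - 3) ≤ ∑ i : Fin 5, (W.filter (fun z => Rᶜ.Adj (P i) z)).card := by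
    have := Finset.card_nsmul_le_sum Finset.univ
      (fun i : Fin 5 => (W.filter (fun z => Rᶜ.Adj (P i) z)).card) (2 * n - 3)
      (fun i _ => hlow i)
    simpa [mul_comm] using this
  have hupper : ∑ z ∈ W, (Finset.univ.filter (fun i : Fin 5 => Rᶜ.Adj (P i) z)).card ≤
      W.card * 2 := by
    have := Finset.sum_le_card_nsmul W
      (fun z => (Finset.univ.filter (fun i : Fin 5 => Rᶜ.Adj (P i) z)).card) 2 hup
    simpa [mul_comm] using this
  rw [hdouble] at hlower
  rw [hWcard] at hupper
  omega
end

section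
/- Let n ≥ 4 be an integer, let K_{6n} be given a red/blue edge-coloring that is (F_n, K_4)-free, and suppose there is a set K of 2n vertices all of whose internal edges are red. Then the subgraph formed by the blue edges among the 4n vertices outside K contains no odd cycle; that is, it is bipartite. -/
open SimpleGraph

set_option linter.unusedSectionVars false

section RM
variable {V : Type*} [DecidableEq V] {R : SimpleGraph V} {S T Z : Finset V} {k : ℕ}

/-- A red matching of `k` disjoint edges inside `S`. -/
def RM (R : SimpleGraph V) (S : Finset V) (k : ℕ) : Prop :=
  ∃ x y : Fin k → V, (∀ i, x i ∈ S) ∧ (∀ i, y i ∈ S) ∧ (∀ i, R.Adj (x i) (y i)) ∧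
    Function.Injective x ∧ Function.Injective y ∧ ∀ i j, x i ≠ y j

lemma rm_zero : RM R S 0 :=
  ⟨Fin.elim0, Fin.elim0, fun i => i.elim0, fun i => i.elim0, fun i => i.elim0,
    fun i => i.elim0, fun i => i.elim0, fun i => i.elim0⟩

lemma rm_mono (h : S ⊆ T) (hm : RM R S k) : RM R T k := by
  obtain ⟨x, y, hx, hy, ha, ix, iy, hxy⟩ := hm
  exact ⟨x, y, fun i => h (hx i), fun i => h (hy i), ha, ix, iy, hxy⟩

lemma rm_cons {a b : V} (hab : R.Adj a b) (ha : a ∉ S) (hb : b ∉ S) (hm : RM R S k) :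
    RM R (insert a (insert b S)) (k + 1) := by
  obtain ⟨x, y, hx, hy, hadj, ix, iy, hxy⟩ := hm
  refine ⟨Fin.cons a x, Fin.cons b y, ?_, ?_, ?_, ?_, ?_, ?_⟩
  · intro i
    refine Fin.cases ?_ ?_ i
    · simp
    · intro j; simp only [Fin.cons_succ]
      exact Finset.mem_insert_of_mem (Finset.mem_insert_of_mem (hx j))
  · intro i
    refine Fin.cases ?_ ?_ i
    · simp
    · intro j; simp only [Fin.cons_succ]
      exact Finset.mem_insert_of_mem (Finset.mem_insert_of_mem (hy j))
  · intro i
    refine Fin.cases ?_ ?_ i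
    · simpa using hab
    · intro j; simpa using hadj j
  · rw [Fin.cons_injective_iff]
    exact ⟨by rintro ⟨j, rfl⟩; exact ha (hx j), ix⟩
  · rw [Fin.cons_injective_iff]
    exact ⟨by rintro ⟨j, rfl⟩; exact hb (hy j), iy⟩
  · intro i j
    refine Fin.cases ?_ ?_ i <;> [skip; intro i'] <;> refine Fin.cases ?_ ?_ j
    · simpa using hab.ne
    · intro j'; simp only [Fin.cons_zero, Fin.cons_succ]
      intro h; exact ha (h ▸ hy j')
    · simp only [Fin.cons_zero, Fin.cons_succ]
      intro h; exact hb (h ▸ hx i')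
    · intro j'; simp only [Fin.cons_succ]; exact hxy i' j'

lemma rm_clique (h2 : ∀ a ∈ Z, ∀ b ∈ Z, a ≠ b → R.Adj a b) (hc : 2 * k ≤ Z.card) :
    RM R Z k := by
  induction k generalizing Z with
  | zero => exact rm_zero
  | succ k ih =>
    obtain ⟨a, ha, b, hb, hab⟩ := Finset.one_lt_card (s := Z) |>.mp (by omega)
    have hsub : (Z.erase a).erase b ⊆ Z := fun x hx =>
      Finset.mem_of_mem_erase (Finset.mem_of_mem_erase hx)
    have hcard : 2 * k ≤ ((Z.erase a).erase b).card := by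
      have h1 : b ∈ Z.erase a := Finset.mem_erase.mpr ⟨fun h => hab h.symm, hb⟩
      have e1 : ((Z.erase a).erase b).card = (Z.erase a).card - 1 :=
        Finset.card_erase_of_mem h1
      have e2 : (Z.erase a).card = Z.card - 1 := Finset.card_erase_of_mem ha
      omega
    have hm := ih (fun x hx y hy hxy => h2 x (hsub hx) y (hsub hy) hxy) hcard
    have := rm_cons (h2 a ha b hb hab)
      (by simp) (by simp [Finset.mem_erase]) hm
    refine rm_mono ?_ this
    intro x hx
    rcases Finset.mem_insert.mp hx with rfl | hx
    · exact ha
    rcases Finset.mem_insert.mp hx with rfl | hx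
    · exact hb
    · exact hsub hx

lemma rm_three
    (h3 : ∀ a ∈ Z, ∀ b ∈ Z, ∀ c ∈ Z, a ≠ b → a ≠ c → b ≠ c →
      R.Adj a b ∨ R.Adj a c ∨ R.Adj b c)
    (hc : 2 * k + 1 ≤ Z.card) : RM R Z k := by
  induction k generalizing Z with
  | zero => exact rm_zero
  | succ k ih =>
    obtain ⟨a, ha⟩ := Finset.card_pos.mp (show (0:ℕ) < Z.card by omega)
    have ea : (Z.erase a).card = Z.card - 1 := Finset.card_erase_of_mem ha
    obtain ⟨b, hb'⟩ := Finset.card_pos.mp (show 0 < (Z.erase a).card by omega)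
    have eb : ((Z.erase a).erase b).card = (Z.erase a).card - 1 :=
      Finset.card_erase_of_mem hb'
    obtain ⟨c, hc'⟩ := Finset.card_pos.mp
      (show 0 < ((Z.erase a).erase b).card by omega)
    have hb : b ∈ Z := Finset.mem_of_mem_erase hb'
    have hcz : c ∈ Z := Finset.mem_of_mem_erase (Finset.mem_of_mem_erase hc')
    have hba : b ≠ a := (Finset.mem_erase.mp hb').1
    have hcb : c ≠ b := (Finset.mem_erase.mp hc').1
    have hca : c ≠ a := (Finset.mem_erase.mp (Finset.mem_of_mem_erase hc')).1
    -- find a red edge among a,b,c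
    obtain ⟨p, q, hp, hq, hpq⟩ :
        ∃ p q, p ∈ Z ∧ q ∈ Z ∧ R.Adj p q := by
      rcases h3 a ha b hb c hcz (Ne.symm hba) (Ne.symm hca) (Ne.symm hcb) with h | h | h
      · exact ⟨a, b, ha, hb, h⟩
      · exact ⟨a, c, ha, hcz, h⟩
      · exact ⟨b, c, hb, hcz, h⟩
    have hsub : (Z.erase p).erase q ⊆ Z := fun x hx =>
      Finset.mem_of_mem_erase (Finset.mem_of_mem_erase hx)
    have hcard : 2 * k + 1 ≤ ((Z.erase p).erase q).card := by
      have h1 : q ∈ Z.erase p := Finset.mem_erase.mpr ⟨fun h => hpq.ne h.symm, hq⟩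
      have e1 : ((Z.erase p).erase q).card = (Z.erase p).card - 1 :=
        Finset.card_erase_of_mem h1
      have e2 : (Z.erase p).card = Z.card - 1 := Finset.card_erase_of_mem hp
      omega
    have hm := ih (fun x hx y hy z hz h1 h2' h3' =>
      h3 x (hsub hx) y (hsub hy) z (hsub hz) h1 h2' h3') hcard
    have := rm_cons hpq (by simp) (by simp [Finset.mem_erase]) hm
    refine rm_mono ?_ this
    intro x hx
    rcases Finset.mem_insert.mp hx with rfl | hx
    · exact hp
    rcases Finset.mem_insert.mp hx with rfl | hx
    · exact hq
    · exact hsub hx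

lemma fan_of_rm {n : ℕ} (c : V) (hS : ∀ z ∈ S, R.Adj c z) (hm : RM R S n) :
    ContainsFan R n := by
  obtain ⟨x, y, hx, hy, hadj, ix, iy, hxy⟩ := hm
  have hcx : ∀ i, c ≠ x i := fun i h => (R.irrefl (h ▸ hS _ (hx i))).elim
  have hcy : ∀ i, c ≠ y i := fun i h => (R.irrefl (h ▸ hS _ (hy i))).elim
  refine ⟨⟨fun o => o.elim c (fun p => bif p.2 then y p.1 else x p.1), ?_⟩, ?_⟩
  · rintro (_ | ⟨i, (_ | _)⟩) (_ | ⟨j, (_ | _)⟩) h <;>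
      simp only [Option.elim, cond_true, cond_false] at h <;> first
      | rfl
      | (exact absurd h (hcx _))
      | (exact absurd h (hcy _))
      | (exact absurd h.symm (hcx _))
      | (exact absurd h.symm (hcy _))
      | (exact absurd h (hxy _ _))
      | (exact absurd h.symm (hxy _ _))
      | (congr 1; exact Prod.ext (ix h) rfl)
      | (congr 1; exact Prod.ext (iy h) rfl)
  · rintro u v ⟨hne, h | h | ⟨i, a, b, rfl, rfl⟩⟩
    · subst h
      rcases v with _ | ⟨j, (_ | _)⟩
      · exact absurd rfl hne
      · exact hS _ (hx j)
      · exact hS _ (hy j)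
    · subst h
      rcases u with _ | ⟨j, (_ | _)⟩
      · exact absurd rfl hne
      · exact (hS _ (hx j)).symm
      · exact (hS _ (hy j)).symm
    · have hab : a ≠ b := fun h => hne (by rw [h])
      cases a <;> cases b
      · exact absurd rfl hab
      · exact hadj i
      · exact (hadj i).symm
      · exact absurd rfl hab

end RM

lemma chain_walk {V : Type*} {G : SimpleGraph V} (f : ℕ → V) (L : ℕ)
    (hadj : ∀ i, i < L → G.Adj (f i) (f (i+1))) :
    ∀ b, b ≤ L → ∀ a, a ≤ b → ∃ p : G.Walk (f a) (f b),
      p.length = b - a ∧ ∀ x ∈ p.support, ∃ i, a ≤ i ∧ i ≤ b ∧ x = f i := by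
  intro b
  induction b with
  | zero =>
    intro _ a ha
    have : a = 0 := Nat.le_zero.mp ha
    subst this
    exact ⟨Walk.nil, by simp, by intro x hx; exact ⟨0, le_refl _, le_refl _, by simpa using hx⟩⟩
  | succ b ih =>
    intro hbL a ha
    rcases Nat.lt_or_ge a (b+1) with h | h
    · have hab : a ≤ b := by omega
      obtain ⟨p, hlen, hsupp⟩ := ih (by omega) a hab
      refine ⟨p.concat (hadj b (by omega)), ?_, ?_⟩
      · rw [Walk.length_concat]; omega
      · intro x hx
        rw [Walk.support_concat] at hx
        rcases (by simpa using hx : x ∈ p.support ∨ x = f (b+1)) with hx | hx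
        · obtain ⟨i, h1, h2, h3⟩ := hsupp x hx
          exact ⟨i, h1, by omega, h3⟩
        · exact ⟨b+1, by omega, le_refl _, hx.symm ▸ rfl⟩
    · have : a = b + 1 := by omega
      subst this
      exact ⟨Walk.nil, by simp, by intro x hx; exact ⟨b+1, le_refl _, le_refl _, by simpa using hx⟩⟩

section Main
variable {n : ℕ} {R : SimpleGraph (Fin (6 * n))} {K : Finset (Fin (6 * n))}

lemma claimA (hn : 4 ≤ n) (hfree : ¬ ContainsFan R n)
    (hKcard : K.card = 2 * n) (hKred : R.IsClique ↑K)
    {x u w : Fin (6 * n)} (hx : x ∉ K) (hu : u ∈ K) (hw : w ∈ K) (huw : u ≠ w)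
    (h1 : R.Adj x u) (h2 : R.Adj x w) : False := by
  obtain ⟨m, rfl⟩ : ∃ m, n = m + 1 := ⟨n - 1, by omega⟩
  have hclique : ∀ a ∈ (K.erase u).erase w, ∀ b ∈ (K.erase u).erase w, a ≠ b → R.Adj a b := by
    intro a ha b hb hab
    exact hKred (Finset.mem_coe.mpr (Finset.mem_of_mem_erase (Finset.mem_of_mem_erase ha)))
      (Finset.mem_coe.mpr (Finset.mem_of_mem_erase (Finset.mem_of_mem_erase hb))) hab
  have hcard : 2 * m ≤ ((K.erase u).erase w).card := by
    have e1 : ((K.erase u).erase w).card = (K.erase u).card - 1 :=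
      Finset.card_erase_of_mem (Finset.mem_erase.mpr ⟨Ne.symm huw, hw⟩)
    have e2 : (K.erase u).card = K.card - 1 := Finset.card_erase_of_mem hu
    omega
  have hm := rm_clique hclique hcard
  have hxw : x ∉ (K.erase u).erase w :=
    fun h => hx (Finset.mem_of_mem_erase (Finset.mem_of_mem_erase h))
  have hww : w ∉ (K.erase u).erase w := fun h => (Finset.mem_erase.mp h).1 rfl
  have hm2 := rm_cons h2 hxw hww hm
  refine hfree (fan_of_rm u ?_ hm2)
  intro z hz
  rcases Finset.mem_insert.mp hz with rfl | hz
  · exact h1.symm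
  rcases Finset.mem_insert.mp hz with rfl | hz
  · exact hKred (Finset.mem_coe.mpr hu) (Finset.mem_coe.mpr hw) huw
  · have hzK : z ∈ K := Finset.mem_of_mem_erase (Finset.mem_of_mem_erase hz)
    have hzu : z ≠ u := (Finset.mem_erase.mp (Finset.mem_of_mem_erase hz)).1
    exact hKred (Finset.mem_coe.mpr hu) (Finset.mem_coe.mpr hzK) (Ne.symm hzu)

lemma claimB (hn : 4 ≤ n) (hfreeF : ¬ ContainsFan R n) (hfreeK : ¬ ContainsK4 Rᶜ)
    (hKcard : K.card = 2 * n) (hKred : R.IsClique ↑K)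
    {x y z : Fin (6 * n)} (hx : x ∉ K) (hy : y ∉ K) (hz : z ∉ K)
    (hxy : x ≠ y) (hxz : x ≠ z) (hyz : y ≠ z) :
    R.Adj x y ∨ R.Adj x z ∨ R.Adj y z := by
  classical
  by_contra hblue
  push_neg at hblue
  obtain ⟨b1, b2, b3⟩ := hblue
  have hsmall : ∀ w : Fin (6 * n), w ∉ K → (K.filter (fun u => R.Adj w u)).card ≤ 1 := by
    intro w hwK
    refine Finset.card_le_one.mpr (fun a ha b hb => ?_)
    by_contra hab
    obtain ⟨haK, haA⟩ := Finset.mem_filter.mp ha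
    obtain ⟨hbK, hbA⟩ := Finset.mem_filter.mp hb
    exact claimA hn hfreeF hKcard hKred hwK haK hbK hab haA hbA
  have hunion : (K.filter (fun u => R.Adj x u ∨ R.Adj y u ∨ R.Adj z u)).card ≤ 3 := by
    calc (K.filter (fun u => R.Adj x u ∨ R.Adj y u ∨ R.Adj z u)).card
        ≤ (K.filter (fun u => R.Adj x u) ∪ (K.filter (fun u => R.Adj y u) ∪
            K.filter (fun u => R.Adj z u))).card := by
          apply Finset.card_le_card
          intro a ha
          obtain ⟨haK, hor⟩ := Finset.mem_filter.mp ha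
          simp only [Finset.mem_union, Finset.mem_filter]
          tauto
      _ ≤ 3 := by
          refine le_trans (Finset.card_union_le _ _) ?_
          have := Finset.card_union_le (K.filter (fun u => R.Adj y u))
            (K.filter (fun u => R.Adj z u))
          have h1 := hsmall x hx
          have h2 := hsmall y hy
          have h3 := hsmall z hz
          omega
  obtain ⟨u, hu⟩ : (K \ K.filter (fun u => R.Adj x u ∨ R.Adj y u ∨ R.Adj z u)).Nonempty := by
    rw [← Finset.card_pos]
    have := Finset.le_card_sdiff (K.filter (fun u => R.Adj x u ∨ R.Adj y u ∨ R.Adj z u)) K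
    omega
  obtain ⟨huK, hnot⟩ := Finset.mem_sdiff.mp hu
  have hnadj : ¬(R.Adj x u ∨ R.Adj y u ∨ R.Adj z u) := fun h =>
    hnot (Finset.mem_filter.mpr ⟨huK, h⟩)
  push_neg at hnadj
  obtain ⟨n1, n2, n3⟩ := hnadj
  refine hfreeK ⟨u, x, y, z, ?_, ?_, ?_, ?_, ?_, ?_⟩
  · exact (compl_adj R u x).mpr ⟨fun h => hx (h ▸ huK), fun h => n1 h.symm⟩
  · exact (compl_adj R u y).mpr ⟨fun h => hy (h ▸ huK), fun h => n2 h.symm⟩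
  · exact (compl_adj R u z).mpr ⟨fun h => hz (h ▸ huK), fun h => n3 h.symm⟩
  · exact (compl_adj R x y).mpr ⟨hxy, b1⟩
  · exact (compl_adj R x z).mpr ⟨hxz, b2⟩
  · exact (compl_adj R y z).mpr ⟨hyz, b3⟩

lemma card_triple (a b c : ℕ) : ({a, b, c} : Finset ℕ).card ≤ 3 := by
  refine le_trans (Finset.card_insert_le _ _) ?_
  have := Finset.card_insert_le b ({c} : Finset ℕ)
  simp only [Finset.card_singleton] at this ⊢
  omega

lemma core (hn : 4 ≤ n) (hfreeF : ¬ ContainsFan R n) (hfreeK : ¬ ContainsK4 Rᶜ)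
    (hKcard : K.card = 2 * n) (hKred : R.IsClique ↑K) :
    ∀ (v : Fin (6 * n)) (w : Rᶜ.Walk v v), (∀ x ∈ w.support, x ∉ K) → ¬ Odd w.length := by
  classical
  by_contra hex
  push_neg at hex
  obtain ⟨v0, w0, hsupp0, hodd0⟩ := hex
  have hPex : ∃ m, ∃ v : Fin (6 * n), ∃ w : Rᶜ.Walk v v,
      (∀ x ∈ w.support, x ∉ K) ∧ Odd w.length ∧ w.length = m :=
    ⟨w0.length, v0, w0, hsupp0, hodd0, rfl⟩
  obtain ⟨v1, w, hsupp, hwodd, hlen⟩ := Nat.find_spec hPex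
  set L := Nat.find hPex with hLdef
  have minOdd : ∀ (u : Fin (6 * n)) (q : Rᶜ.Walk u u),
      (∀ x ∈ q.support, x ∉ K) → Odd q.length → L ≤ q.length := by
    intro u q hq hodds
    by_contra hlt
    exact Nat.find_min hPex (show q.length < L by omega) ⟨u, q, hq, hodds, rfl⟩
  set f : ℕ → Fin (6 * n) := fun i => w.getVert i with hfdef
  have hoddL : L % 2 = 1 := by
    rw [← hlen]; exact Nat.odd_iff.mp hwodd
  have hadj : ∀ i, i < L → Rᶜ.Adj (f i) (f (i + 1)) := by
    intro i hi
    exact w.adj_getVert_succ (by omega : i < w.length)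
  have hf0 : f 0 = v1 := w.getVert_zero
  have hfL : f L = f 0 := by
    rw [hf0, hfdef]
    simp only
    rw [← hlen]
    exact w.getVert_length
  have hfK : ∀ i, i ≤ L → f i ∉ K := by
    intro i hi
    exact hsupp _ (Walk.mem_support_iff_exists_getVert.mpr ⟨i, rfl, by omega⟩)
  have cw := chain_walk f L hadj
  -- master splicing bounds
  have M1 : ∀ i j, i ≤ j → j ≤ L → ∀ b : Rᶜ.Walk (f j) (f i),
      (∀ x ∈ b.support, x ∉ K) → Odd (j - i + b.length) → L ≤ j - i + b.length := by
    intro i j hij hjL b hbsupp hodd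
    obtain ⟨p, hplen, hpsupp⟩ := cw j hjL i hij
    have hq : ∀ x ∈ (p.append b).support, x ∉ K := by
      intro x hx
      rcases (Walk.mem_support_append_iff _ _).mp hx with hx | hx
      · obtain ⟨i', h1, h2, rfl⟩ := hpsupp x hx
        exact hfK i' (by omega)
      · exact hbsupp x hx
    have hlenq : (p.append b).length = j - i + b.length := by
      rw [Walk.length_append, hplen]
    have := minOdd _ (p.append b) hq (by rwa [hlenq])
    omega
  have M2 : ∀ i j, i ≤ j → j ≤ L → ∀ b : Rᶜ.Walk (f i) (f j),
      (∀ x ∈ b.support, x ∉ K) → Odd (i + b.length + (L - j)) →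
      L ≤ i + b.length + (L - j) := by
    intro i j hij hjL b hbsupp hodd
    obtain ⟨p1, hp1len, hp1supp⟩ := cw i (by omega) 0 (by omega)
    obtain ⟨p2, hp2len, hp2supp⟩ := cw L le_rfl j hjL
    set q : Rᶜ.Walk (f 0) (f 0) := (p1.append (b.append p2)).copy rfl hfL with hqdef
    have hq : ∀ x ∈ q.support, x ∉ K := by
      intro x hx
      rw [hqdef, Walk.support_copy] at hx
      rcases (Walk.mem_support_append_iff _ _).mp hx with hx | hx
      · obtain ⟨i', h1, h2, rfl⟩ := hp1supp x hx
        exact hfK i' (by omega)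
      rcases (Walk.mem_support_append_iff _ _).mp hx with hx | hx
      · exact hbsupp x hx
      · obtain ⟨i', h1, h2, rfl⟩ := hp2supp x hx
        exact hfK i' (by omega)
    have hlenq : q.length = i + b.length + (L - j) := by
      rw [hqdef, Walk.length_copy, Walk.length_append, Walk.length_append,
        hp1len, hp2len]
      omega
    have := minOdd _ q hq (by rwa [hlenq])
    omega
  -- distinctness
  have F0 : ∀ i j, i < j → j < L → f i ≠ f j := by
    intro i j hij hjL heq
    rcases Nat.even_or_odd (j - i) with hpar | hpar
    · -- shortcut: closed walk of length L - (j-i), odd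
      have := M2 i j (by omega) (by omega)
        ((Walk.nil : Rᶜ.Walk (f i) (f i)).copy rfl heq)
        (by
          intro x hx
          rw [Walk.support_copy] at hx
          rw [Walk.mem_support_nil_iff] at hx
          exact hx ▸ hfK i (by omega))
        (by
          rw [Walk.length_copy]
          rw [Nat.odd_iff] at *
          rw [Nat.even_iff] at hpar
          simp only [Walk.length_nil]
          omega)
      simp only [Walk.length_copy, Walk.length_nil] at this
      omega
    · have := M1 i j (by omega) (by omega)
        ((Walk.nil : Rᶜ.Walk (f j) (f j)).copy rfl heq.symm)
        (by
          intro x hx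
          rw [Walk.support_copy, Walk.mem_support_nil_iff] at hx
          exact hx ▸ hfK j (by omega))
        (by
          rw [Walk.length_copy]
          simp only [Walk.length_nil, Nat.add_zero]
          exact hpar)
      simp only [Walk.length_copy, Walk.length_nil] at this
      omega
  -- blue chords
  have F1 : ∀ i j, i < j → j ≤ L → Rᶜ.Adj (f i) (f j) → j - i = 1 ∨ j - i = L - 1 := by
    intro i j hij hjL he
    have hne : j - i ≠ L := by
      intro h
      have hi0 : i = 0 := by omega
      have hjL' : j = L := by omega
      subst hi0; subst hjL'
      rw [hfL] at he
      exact he.ne rfl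
    rcases Nat.even_or_odd (j - i) with hpar | hpar
    · -- detour with one edge, length (j-i)+1 odd
      have := M1 i j (by omega) hjL (Walk.cons he.symm Walk.nil)
        (by
          intro x hx
          simp only [Walk.support_cons, Walk.mem_support_nil_iff, List.mem_cons,
            List.mem_singleton] at hx
          rcases hx with rfl | hx
          · exact hfK j (by omega)
          · exact hx ▸ hfK i (by omega))
        (by
          simp only [Walk.length_cons, Walk.length_nil]
          rw [Nat.odd_iff]
          rw [Nat.even_iff] at hpar
          omega)
      simp only [Walk.length_cons, Walk.length_nil] at this
      rw [Nat.even_iff] at hpar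
      omega
    · -- shortcut with one edge, length L - (j - i) + 1 odd
      have := M2 i j (by omega) hjL (Walk.cons he Walk.nil)
        (by
          intro x hx
          simp only [Walk.support_cons, Walk.mem_support_nil_iff, List.mem_cons,
            List.mem_singleton] at hx
          rcases hx with rfl | hx
          · exact hfK i (by omega)
          · exact hx ▸ hfK j (by omega))
        (by
          simp only [Walk.length_cons, Walk.length_nil]
          rw [Nat.odd_iff]
          rw [Nat.odd_iff] at hpar
          omega)
      simp only [Walk.length_cons, Walk.length_nil] at this
      rw [Nat.odd_iff] at hpar
      omega
  -- outside vertex blue to two cycle vertices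
  have F2 : ∀ x : Fin (6 * n), x ∉ K → ∀ i j, i < j → j < L →
      Rᶜ.Adj x (f i) → Rᶜ.Adj x (f j) → j - i = 2 ∨ j - i = L - 2 := by
    intro x hxK i j hij hjL hbi hbj
    rcases Nat.even_or_odd (j - i) with hpar | hpar
    · -- shortcut through x: length (L - (j-i)) + 2 odd
      have := M2 i j (by omega) (by omega)
        (Walk.cons hbi.symm (Walk.cons hbj Walk.nil))
        (by
          intro y hy
          simp only [Walk.support_cons, Walk.mem_support_nil_iff, List.mem_cons,
            List.mem_singleton] at hy
          rcases hy with rfl | hy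
          · exact hfK i (by omega)
          rcases hy with rfl | hy
          · exact hxK
          · exact hy ▸ hfK j (by omega))
        (by
          simp only [Walk.length_cons, Walk.length_nil]
          rw [Nat.odd_iff]
          rw [Nat.even_iff] at hpar
          omega)
      simp only [Walk.length_cons, Walk.length_nil] at this
      rw [Nat.even_iff] at hpar
      omega
    · -- detour through x: length (j-i)+2 odd
      have := M1 i j (by omega) (by omega)
        (Walk.cons hbj.symm (Walk.cons hbi Walk.nil))
        (by
          intro y hy
          simp only [Walk.support_cons, Walk.mem_support_nil_iff, List.mem_cons,
            List.mem_singleton] at hy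
          rcases hy with rfl | hy
          · exact hfK j (by omega)
          rcases hy with rfl | hy
          · exact hxK
          · exact hy ▸ hfK i (by omega))
        (by
          simp only [Walk.length_cons, Walk.length_nil]
          rw [Nat.odd_iff]
          rw [Nat.odd_iff] at hpar
          omega)
      simp only [Walk.length_cons, Walk.length_nil] at this
      rw [Nat.odd_iff] at hpar
      omega
  -- basic size facts about L
  have hL1 : L ≠ 1 := by
    intro h
    have := hadj 0 (by omega)
    rw [show (0:ℕ) + 1 = L by omega, hfL] at this
    exact this.ne rfl
  have hL3 : L ≠ 3 := by
    intro h
    have h01 := hadj 0 (by omega)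
    have h12 := hadj 1 (by omega)
    have h23 := hadj 2 (by omega)
    rw [show (2:ℕ) + 1 = L by omega, hfL] at h23
    have d01 : f 0 ≠ f 1 := F0 0 1 (by omega) (by omega)
    have d02 : f 0 ≠ f 2 := F0 0 2 (by omega) (by omega)
    have d12 : f 1 ≠ f 2 := F0 1 2 (by omega) (by omega)
    rcases claimB hn hfreeF hfreeK hKcard hKred (hfK 0 (by omega)) (hfK 1 (by omega))
      (hfK 2 (by omega)) d01 d02 d12 with hr | hr | hr
    · exact ((compl_adj R _ _).mp h01).2 hr
    · exact ((compl_adj R _ _).mp h23.symm).2 hr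
    · exact ((compl_adj R _ _).mp h12).2 hr
  have hL5 : 5 ≤ L := by omega
  -- no vertex is blue to three cycle vertices
  have F2' : ∀ x : Fin (6 * n), x ∉ K → ∀ i j k, i < j → j < k → k < L →
      Rᶜ.Adj x (f i) → Rᶜ.Adj x (f j) → Rᶜ.Adj x (f k) → False := by
    intro x hxK i j k hij hjk hkL hbi hbj hbk
    have d1 := F2 x hxK i j hij (by omega) hbi hbj
    have d2 := F2 x hxK j k hjk hkL hbj hbk
    have d3 := F2 x hxK i k (by omega) hkL hbi hbk
    omega
  -- counting setup
  set O : Finset (Fin (6 * n)) := Finset.univ \ K with hOdef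
  have hOcard : O.card = 4 * n := by
    rw [hOdef, Finset.card_sdiff_of_subset (Finset.subset_univ K), hKcard]
    simp only [Finset.card_univ, Fintype.card_fin]
    omega
  set C : Finset (Fin (6 * n)) := (Finset.range L).image f with hCdef
  have hCcard : C.card = L := by
    rw [hCdef, Finset.card_image_of_injOn, Finset.card_range]
    intro a ha b hb hab
    simp only [Finset.coe_range, Set.mem_Iio] at ha hb
    by_contra hne
    rcases Nat.lt_or_ge a b with h | h
    · exact F0 a b h hb hab
    · exact F0 b a (by omega) ha hab.symm
  have hCO : C ⊆ O := by
    intro c hc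
    obtain ⟨i, hi, rfl⟩ := Finset.mem_image.mp hc
    rw [Finset.mem_range] at hi
    exact Finset.mem_sdiff.mpr ⟨Finset.mem_univ _, hfK i (by omega)⟩
  have hL4n : L ≤ 4 * n := by
    have := Finset.card_le_card hCO
    omega
  set NC : Finset (Fin (6 * n)) := O \ C with hNCdef
  have hNCcard : NC.card = 4 * n - L := by
    rw [hNCdef, Finset.card_sdiff_of_subset hCO, hOcard, hCcard]
  -- each non-cycle outside vertex is red to at least L - 2 cycle indices
  have hRx : ∀ x ∈ NC, L - 2 ≤ ((Finset.range L).filter (fun j => R.Adj x (f j))).card := by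
    intro x hx
    obtain ⟨hxO, hxC⟩ := Finset.mem_sdiff.mp hx
    have hxK : x ∉ K := (Finset.mem_sdiff.mp hxO).2
    have hxf : ∀ i, i < L → x ≠ f i := by
      intro i hi heq
      exact hxC (heq ▸ Finset.mem_image.mpr ⟨i, Finset.mem_range.mpr hi, rfl⟩)
    have hpart := Finset.card_filter_add_card_filter_not
      (s := Finset.range L) (p := fun j => R.Adj x (f j))
    have hBeq : (Finset.range L).filter (fun j => ¬ R.Adj x (f j)) =
        (Finset.range L).filter (fun j => Rᶜ.Adj x (f j)) := by
      apply Finset.filter_congr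
      intro j hj
      rw [Finset.mem_range] at hj
      constructor
      · intro h
        exact (compl_adj R x (f j)).mpr ⟨hxf j hj, h⟩
      · intro h
        exact ((compl_adj R x (f j)).mp h).2
    have hB2 : ((Finset.range L).filter (fun j => Rᶜ.Adj x (f j))).card ≤ 2 := by
      by_contra hB
      set B := (Finset.range L).filter (fun j => Rᶜ.Adj x (f j)) with hBdef
      have h3 : 3 ≤ B.card := by omega
      obtain ⟨a, ha⟩ := Finset.card_pos.mp (show (0:ℕ) < B.card by omega)
      have ea : (B.erase a).card = B.card - 1 := Finset.card_erase_of_mem ha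
      obtain ⟨b, hb'⟩ := Finset.card_pos.mp (show 0 < (B.erase a).card by omega)
      have eb : ((B.erase a).erase b).card = (B.erase a).card - 1 :=
        Finset.card_erase_of_mem hb'
      obtain ⟨c, hc'⟩ := Finset.card_pos.mp (show 0 < ((B.erase a).erase b).card by omega)
      have hbB : b ∈ B := Finset.mem_of_mem_erase hb'
      have hcB : c ∈ B := Finset.mem_of_mem_erase (Finset.mem_of_mem_erase hc')
      have hba : b ≠ a := (Finset.mem_erase.mp hb').1
      have hcb : c ≠ b := (Finset.mem_erase.mp hc').1
      have hca : c ≠ a := (Finset.mem_erase.mp (Finset.mem_of_mem_erase hc')).1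
      have hmem : ∀ i ∈ B, i < L ∧ Rᶜ.Adj x (f i) := by
        intro i hi
        obtain ⟨h1, h2⟩ := Finset.mem_filter.mp hi
        exact ⟨Finset.mem_range.mp h1, h2⟩
      obtain ⟨haL, hax⟩ := hmem a ha
      obtain ⟨hbL, hbx⟩ := hmem b hbB
      obtain ⟨hcL, hcx⟩ := hmem c hcB
      rcases Nat.lt_trichotomy a b with h1 | h1 | h1
      · rcases Nat.lt_trichotomy b c with h2 | h2 | h2
        · exact F2' x hxK a b c h1 h2 hcL hax hbx hcx
        · exact hcb h2.symm
        · rcases Nat.lt_trichotomy a c with h3' | h3' | h3'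
          · exact F2' x hxK a c b h3' h2 hbL hax hcx hbx
          · exact hca h3'.symm
          · exact F2' x hxK c a b h3' h1 hbL hcx hax hbx
      · exact hba h1.symm
      · rcases Nat.lt_trichotomy a c with h2 | h2 | h2
        · exact F2' x hxK b a c h1 h2 hcL hbx hax hcx
        · exact hca h2.symm
        · rcases Nat.lt_trichotomy b c with h3' | h3' | h3'
          · exact F2' x hxK b c a h3' h2 haL hbx hcx hax
          · exact hcb h3'.symm
          · exact F2' x hxK c b a h3' h1 haL hcx hbx hax
    rw [hBeq] at hpart
    rw [Finset.card_range] at hpart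
    omega
  -- double counting and pigeonhole
  set X : ℕ → Finset (Fin (6 * n)) := fun j => NC.filter (fun x => R.Adj x (f j)) with hXdef
  have hsum : (4 * n - L) * (L - 2) ≤ ∑ j ∈ Finset.range L, (X j).card := by
    have e1 : ∑ x ∈ NC, (L - 2) ≤
        ∑ x ∈ NC, ((Finset.range L).filter (fun j => R.Adj x (f j))).card :=
      Finset.sum_le_sum hRx
    have e2 : ∑ x ∈ NC, ((Finset.range L).filter (fun j => R.Adj x (f j))).card =
        ∑ j ∈ Finset.range L, (X j).card := by
      calc ∑ x ∈ NC, ((Finset.range L).filter (fun j' => R.Adj x (f j'))).card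
          = ∑ x ∈ NC, ∑ j' ∈ Finset.range L, (if R.Adj x (f j') then 1 else 0) := by
            refine Finset.sum_congr rfl (fun x _ => ?_)
            rw [Finset.sum_boole]
            simp
        _ = ∑ j' ∈ Finset.range L, ∑ x ∈ NC, (if R.Adj x (f j') then 1 else 0) :=
            Finset.sum_comm
        _ = ∑ j' ∈ Finset.range L, (X j').card := by
            refine Finset.sum_congr rfl (fun j' _ => ?_)
            rw [Finset.sum_boole]
            simp
            rfl
    rw [Finset.sum_const, smul_eq_mul, hNCcard] at e1
    omega
  obtain ⟨j, hjmem, hjmax⟩ := Finset.exists_max_image (Finset.range L)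
    (fun j => (X j).card) ⟨0, Finset.mem_range.mpr (by omega)⟩
  have hjL : j < L := Finset.mem_range.mp hjmem
  have hXj : (4 * n - L) * (L - 2) ≤ L * (X j).card := by
    have := Finset.sum_le_card_nsmul (Finset.range L) (fun j' => (X j').card)
      ((X j).card) (fun j' hj' => hjmax j' hj')
    rw [Finset.card_range, smul_eq_mul] at this
    omega
  -- chord indices
  set D : Finset ℕ := (Finset.range L).filter
    (fun k => k ≠ j ∧ k + 1 ≠ j ∧ j + 1 ≠ k ∧ ¬(k = 0 ∧ j = L - 1) ∧ ¬(j = 0 ∧ k = L - 1))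
    with hDdef
  have hDcard : L - 3 ≤ D.card := by
    set T : Finset ℕ := if j = 0 then {0, 1, L - 1}
      else if j = L - 1 then {L - 1, L - 2, 0} else {j - 1, j, j + 1} with hTdef
    have hT3 : T.card ≤ 3 := by
      rw [hTdef]; split_ifs <;> exact card_triple _ _ _
    have hTcov : Finset.range L \ T ⊆ D := by
      intro k hk
      obtain ⟨hkr, hkT⟩ := Finset.mem_sdiff.mp hk
      have hkL : k < L := Finset.mem_range.mp hkr
      rw [hDdef, Finset.mem_filter]
      refine ⟨hkr, ?_⟩
      have : k ∉ T := hkT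
      rw [hTdef] at this
      split_ifs at this with h1 h2 <;>
        simp only [Finset.mem_insert, Finset.mem_singleton, not_or] at this <;>
        omega
    have h1 : (Finset.range L).card - T.card ≤ (Finset.range L \ T).card :=
      Finset.le_card_sdiff T (Finset.range L)
    have h2 := Finset.card_le_card hTcov
    rw [Finset.card_range] at h1
    omega
  have hchord : ∀ k ∈ D, R.Adj (f j) (f k) := by
    intro k hk
    obtain ⟨hkr, hkj, hk1, hj1, hc1, hc2⟩ := Finset.mem_filter.mp hk
    have hkL : k < L := Finset.mem_range.mp hkr
    have hne : f j ≠ f k := by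
      rcases Nat.lt_trichotomy j k with h | h | h
      · exact F0 j k h hkL
      · exact absurd h.symm hkj
      · exact (F0 k j h hjL).symm
    by_contra hnot
    have hblue : Rᶜ.Adj (f j) (f k) := (compl_adj R _ _).mpr ⟨hne, hnot⟩
    rcases Nat.lt_trichotomy j k with h | h | h
    · rcases F1 j k h (by omega) hblue with h' | h' <;> omega
    · exact hkj h.symm
    · rcases F1 k j h (by omega) hblue.symm with h' | h' <;> omega
  -- the chord vertices
  set Cd : Finset (Fin (6 * n)) := D.image f with hCddef
  have hCdcard : Cd.card = D.card := by
    rw [hCddef]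
    apply Finset.card_image_of_injOn
    intro a ha b hb hab
    have haL : a < L := Finset.mem_range.mp (Finset.mem_of_mem_filter a (by
      rw [hDdef] at ha; exact ha))
    have hbL : b < L := Finset.mem_range.mp (Finset.mem_of_mem_filter b (by
      rw [hDdef] at hb; exact hb))
    by_contra hne
    rcases Nat.lt_or_ge a b with h | h
    · exact F0 a b h hbL hab
    · exact F0 b a (by omega) haL hab.symm
  have hCdC : Cd ⊆ C := by
    intro c hc
    obtain ⟨k, hk, rfl⟩ := Finset.mem_image.mp hc
    have : k ∈ Finset.range L := Finset.mem_of_mem_filter k (by rw [hDdef] at hk; exact hk)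
    exact Finset.mem_image.mpr ⟨k, this, rfl⟩
  set Z : Finset (Fin (6 * n)) := X j ∪ Cd with hZdef
  have hdisj : Disjoint (X j) Cd := by
    rw [Finset.disjoint_left]
    intro a ha haC
    have : a ∈ NC := Finset.mem_of_mem_filter a ha
    exact (Finset.mem_sdiff.mp this).2 (hCdC haC)
  have hZcard : 2 * n + 1 ≤ Z.card := by
    rw [hZdef, Finset.card_union_of_disjoint hdisj, hCdcard]
    rcases Nat.lt_or_ge L (2 * n + 4) with hcase | hcase
    · -- need X j large
      have hXlarge : 2 * n + 4 - L ≤ (X j).card := by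
        by_contra hsmall
        push_neg at hsmall
        have h1 : L * (X j).card ≤ L * (2 * n + 3 - L) :=
          Nat.mul_le_mul_left L (by omega)
        have h2 : (4 * n - L) * (L - 2) ≤ L * (2 * n + 3 - L) := le_trans hXj h1
        zify [hL4n, (show 2 ≤ L by omega), (show L ≤ 2 * n + 3 by omega)] at h2
        have hn' : (4 : ℤ) ≤ (n : ℤ) := by exact_mod_cast hn
        have hL5' : (5 : ℤ) ≤ (L : ℤ) := by exact_mod_cast hL5
        have hLle : (L : ℤ) ≤ 2 * (n : ℤ) + 3 := by
          have : L ≤ 2 * n + 3 := by omega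
          exact_mod_cast this
        nlinarith [mul_nonneg (sub_nonneg.mpr hn') (sub_nonneg.mpr hL5'),
          mul_nonneg (sub_nonneg.mpr hL5') (sub_nonneg.mpr hL5')]
      omega
    · omega
  have hZK : ∀ z ∈ Z, z ∉ K := by
    intro z hz
    rcases Finset.mem_union.mp hz with hz | hz
    · have : z ∈ NC := Finset.mem_of_mem_filter z hz
      exact (Finset.mem_sdiff.mp ((Finset.mem_sdiff.mp this).1)).2
    · have : z ∈ O := hCO (hCdC hz)
      exact (Finset.mem_sdiff.mp this).2
  have hZadj : ∀ z ∈ Z, R.Adj (f j) z := by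
    intro z hz
    rcases Finset.mem_union.mp hz with hz | hz
    · exact (Finset.mem_filter.mp hz).2.symm
    · obtain ⟨k, hk, rfl⟩ := Finset.mem_image.mp hz
      exact hchord k hk
  have hZ3 : ∀ a ∈ Z, ∀ b ∈ Z, ∀ c ∈ Z, a ≠ b → a ≠ c → b ≠ c →
      R.Adj a b ∨ R.Adj a c ∨ R.Adj b c := by
    intro a ha b hb c hc hab hac hbc
    exact claimB hn hfreeF hfreeK hKcard hKred (hZK a ha) (hZK b hb) (hZK c hc) hab hac hbc
  exact hfreeF (fan_of_rm (f j) hZadj (rm_three hZ3 hZcard))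

end Main

/-- If an `(Fₙ, K₄)`-free coloring of `K_{6n}` (`n ≥ 4`) contains a red clique `K`
of order `2n`, then the blue subgraph on the vertices outside `K` contains no odd
cycle; that is, it is bipartite (2-colorable). -/
theorem blue_outside_bipartite (n : ℕ) (hn : 4 ≤ n)
    (R : SimpleGraph (Fin (6 * n)))
    (hfree : ¬ ContainsFan R n ∧ ¬ ContainsK4 Rᶜ)
    (K : Finset (Fin (6 * n))) (hKcard : K.card = 2 * n) (hKred : R.IsClique ↑K) :
    (∀ (v : Fin (6 * n)) (c : Rᶜ.Walk v v), c.IsCycle →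
      (∀ x ∈ c.support, x ∉ K) → ¬ Odd c.length) ∧
    (Rᶜ.induce {x : Fin (6 * n) | x ∉ K}).Colorable 2 := by
  obtain ⟨hfreeF, hfreeK⟩ := hfree
  have noK := core hn hfreeF hfreeK hKcard hKred
  refine ⟨fun v c _ hsupp => noK v c hsupp, ?_⟩
  set s : Set (Fin (6 * n)) := {x : Fin (6 * n) | x ∉ K} with hsdef
  set G' : SimpleGraph s := Rᶜ.induce s with hG'def
  have hvalid : ∀ {a b : s}, G'.Adj a b →
      (G'.dist (Quot.out (G'.connectedComponentMk a)) a) % 2 ≠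
      (G'.dist (Quot.out (G'.connectedComponentMk b)) b) % 2 := by
    intro a b hab heq
    have hcomp : G'.connectedComponentMk a = G'.connectedComponentMk b :=
      ConnectedComponent.sound hab.reachable
    set ρ : s := Quot.out (G'.connectedComponentMk a) with hρ
    have hma : G'.connectedComponentMk ρ = G'.connectedComponentMk a :=
      Quot.out_eq (G'.connectedComponentMk a)
    have hra : G'.Reachable ρ a := ConnectedComponent.eq.mp hma
    have hrb : G'.Reachable ρ b := by
      rw [hcomp] at hma
      exact ConnectedComponent.eq.mp hma
    obtain ⟨p, hp⟩ := hra.exists_walk_length_eq_dist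
    obtain ⟨q, hq⟩ := hrb.exists_walk_length_eq_dist
    set W : G'.Walk ρ ρ := p.append (Walk.cons hab q.reverse) with hWdef
    have hWlen : W.length = p.length + 1 + q.length := by
      rw [hWdef, Walk.length_append, Walk.length_cons, Walk.length_reverse]
      omega
    -- map W into Rᶜ
    set ι : G' ↪g Rᶜ := SimpleGraph.Embedding.induce s with hι
    set W' : Rᶜ.Walk (ι ρ) (ι ρ) := W.map ι.toHom with hW'def
    have hW'supp : ∀ x ∈ W'.support, x ∉ K := by
      intro x hx
      rw [hW'def, Walk.support_map] at hx
      obtain ⟨y, _, rfl⟩ := List.mem_map.mp hx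
      exact y.2
    have hW'odd : Odd W'.length := by
      rw [hW'def, Walk.length_map, hWlen]
      rw [Nat.odd_iff]
      have hq2 : G'.dist ρ b % 2 = q.length % 2 := by rw [hq]
      have hp2 : G'.dist ρ a % 2 = p.length % 2 := by rw [hp]
      rw [← hcomp] at heq
      rw [← hρ] at heq
      omega
    exact noK (ι ρ) W' hW'supp hW'odd
  exact ⟨Coloring.mk
    (fun v => (⟨(G'.dist (Quot.out (G'.connectedComponentMk v)) v) % 2,
      Nat.mod_lt _ (by norm_num)⟩ : Fin 2))
    (fun hab heq => hvalid hab (by simpa using congrArg Fin.val heq))⟩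
end
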